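/- arXiv:1906.11743 — 6 statements merged into one kernel-verified Lean document; each statement's English description precedes it below -/
import Mathlib

section
/- Let s and t be integers with 2 ≤ s ≤ t−1, and let G be a finite simple graph. Suppose that γ^{s/t}(G) is not an integer and that γ^{s/t}(G) ≤ ⌊γ^{s/t}(G)⌋ + (s−1)/t. Then γ^{1/t}(G) < ⌊γ^{s/t}(G)⌋. -/
open Filter

/-- A `c`-self dominating function of `G` with values in `{0, 1, c}`. -/
def SimpleGraph.IsSDF {V : Type*} (G : SimpleGraph V) (c : ℝ) (f : V → ℝ) : Prop :=
  (∀ u, f u = 0 ∨ f u = 1 ∨ f u = c) ∧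
  (∀ u, c ≤ f u ∨ ∃ v, G.Adj u v ∧ 1 ≤ f v)

/-- The `c`-self domination number of `G`. -/
noncomputable def SimpleGraph.selfDom {V : Type*} [Fintype V] (G : SimpleGraph V) (c : ℝ) : ℝ :=
  sInf {w : ℝ | ∃ f : V → ℝ, G.IsSDF c f ∧ w = ∑ u, f u}

section Aux
variable {V : Type*} [Fintype V] (G : SimpleGraph V)

lemma sdf_set_finite (c : ℝ) :
    {w : ℝ | ∃ f : V → ℝ, G.IsSDF c f ∧ w = ∑ u, f u}.Finite := by
  have hsub : {w : ℝ | ∃ f : V → ℝ, G.IsSDF c f ∧ w = ∑ u, f u}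
      ⊆ (fun f : V → ℝ => ∑ u, f u) '' (Set.pi Set.univ fun _ : V => ({0, 1, c} : Set ℝ)) := by
    rintro w ⟨f, hf, rfl⟩
    exact ⟨f, fun u _ => by rcases hf.1 u with h|h|h <;> simp [h], rfl⟩
  exact ((Set.Finite.pi fun _ => ((Set.finite_singleton c).insert 1).insert 0).image _).subset hsub

lemma sdf_set_nonempty (c : ℝ) (hc : c ≤ 1) :
    {w : ℝ | ∃ f : V → ℝ, G.IsSDF c f ∧ w = ∑ u, f u}.Nonempty :=
  ⟨∑ _u : V, (1:ℝ), fun _ => 1, ⟨fun _ => Or.inr (Or.inl rfl), fun _ => Or.inl hc⟩, rfl⟩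

lemma sdf_set_bddBelow (c : ℝ) (hc : 0 ≤ c) :
    BddBelow {w : ℝ | ∃ f : V → ℝ, G.IsSDF c f ∧ w = ∑ u, f u} := by
  refine ⟨0, ?_⟩
  rintro w ⟨f, hf, rfl⟩
  refine Finset.sum_nonneg fun u _ => ?_
  rcases hf.1 u with h|h|h <;> simp [h, hc]

lemma sum_decomp (c : ℝ) (hc0 : c ≠ 0) (hc1 : c ≠ 1) (f : V → ℝ)
    (hv : ∀ u, f u = 0 ∨ f u = 1 ∨ f u = c) :
    ∑ u, f u = (Finset.univ.filter fun u => f u = 1).card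
      + (Finset.univ.filter fun u => f u = c).card * c := by
  have key : ∀ u, f u = (if f u = 1 then (1:ℝ) else 0) + (if f u = c then c else 0) := by
    intro u
    rcases hv u with h|h|h <;>
      simp [h, hc0, hc1, Ne.symm hc0, Ne.symm hc1, (zero_ne_one (α := ℝ))]
  rw [Finset.sum_congr rfl fun u _ => key u, Finset.sum_add_distrib,
    ← Finset.sum_filter, ← Finset.sum_filter]
  simp [mul_comm]

end Aux

theorem stmt_7 {V : Type*} [Fintype V] (G : SimpleGraph V) (s t : ℕ)
    (hs : 2 ≤ s) (hst : s ≤ t - 1)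
    (h1 : ¬ ∃ z : ℤ, G.selfDom ((s : ℝ) / t) = (z : ℝ))
    (h2 : G.selfDom ((s : ℝ) / t) ≤
      (⌊G.selfDom ((s : ℝ) / t)⌋ : ℝ) + ((s : ℝ) - 1) / t) :
    G.selfDom ((1 : ℝ) / t) < (⌊G.selfDom ((s : ℝ) / t)⌋ : ℝ) := by
  have hst' : s + 1 ≤ t := by omega
  have ht0 : (0:ℝ) < t := by exact_mod_cast (by omega : 0 < t)
  have hsR : (2:ℝ) ≤ s := by exact_mod_cast hs
  have hstR : (s:ℝ) + 1 ≤ t := by exact_mod_cast hst'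
  set c : ℝ := (s:ℝ) / t with hcdef
  have hc0 : 0 < c := by positivity
  have hc1 : c < 1 := by rw [hcdef, div_lt_one ht0]; linarith
  -- minimizer for c
  have hmem : G.selfDom c ∈ {w : ℝ | ∃ f : V → ℝ, G.IsSDF c f ∧ w = ∑ u, f u} :=
    (sdf_set_nonempty G c hc1.le).csInf_mem (sdf_set_finite G c)
  obtain ⟨f, hf, hγ⟩ := hmem
  set a : ℕ := (Finset.univ.filter fun u => f u = 1).card with hadef
  set b : ℕ := (Finset.univ.filter fun u => f u = c).card with hbdef
  have hγval : G.selfDom c = a + b * c := by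
    rw [hγ, sum_decomp c hc0.ne' hc1.ne f hf.1]
  obtain ⟨q, r, heq, hrt⟩ : ∃ q r, t * q + r = b * s ∧ r < t :=
    ⟨b * s / t, b * s % t, Nat.div_add_mod (b * s) t, Nat.mod_lt _ (by omega)⟩
  have hbc : (b:ℝ) * c = q + r / t := by
    have : ((b:ℝ) * s) = t * q + r := by exact_mod_cast congrArg (Nat.cast : ℕ → ℝ) heq.symm
    rw [hcdef]
    field_simp
    linarith
  have hγval' : G.selfDom c = a + q + r / t := by rw [hγval, hbc]; ring
  have hfloor : ⌊G.selfDom c⌋ = (a : ℤ) + q := by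
    rw [Int.floor_eq_iff]
    constructor
    · push_cast
      rw [hγval']
      have : (0:ℝ) ≤ r / t := by positivity
      linarith
    · push_cast
      rw [hγval']
      have : (r:ℝ) / t < 1 := by rw [div_lt_one ht0]; exact_mod_cast hrt
      linarith
  have hr1 : 1 ≤ r := by
    by_contra h
    have hr0 : r = 0 := by omega
    exact h1 ⟨(a : ℤ) + q, by rw [hγval', hr0]; push_cast; ring⟩
  have hrs : r + 1 ≤ s := by
    rw [hfloor] at h2
    rw [hγval'] at h2
    have : (r:ℝ) / t ≤ ((s:ℝ) - 1) / t := by push_cast at h2 ⊢; linarith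
    have hrl : (r:ℝ) ≤ (s:ℝ) - 1 := by
      rwa [div_le_div_iff_of_pos_right ht0] at this
    exact_mod_cast (by linarith : (r:ℝ) + 1 ≤ s)
  have hb2 : 2 ≤ b := by
    rcases Nat.lt_or_ge b 2 with h | h
    · interval_cases b
      · omega
      · rcases Nat.eq_zero_or_pos q with hq | hq
        · subst hq; omega
        · have : t ≤ t * q := Nat.le_mul_of_pos_right t hq
          omega
    · exact h
  have key : b < q * t := by
    have h1' : ((t:ℤ)) * q + r = b * s := by exact_mod_cast heq
    have h2' : (r:ℤ) + 1 ≤ s := by exact_mod_cast hrs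
    have h3' : (1:ℤ) ≤ r := by exact_mod_cast hr1
    have h4' : (2:ℤ) ≤ b := by exact_mod_cast hb2
    have h5' : (2:ℤ) ≤ s := by exact_mod_cast hs
    have hbint : (b:ℤ) < q * t := by
      nlinarith [mul_nonneg (by linarith : (0:ℤ) ≤ (b:ℤ) - 1) (by linarith : (0:ℤ) ≤ (s:ℤ) - 2)]
    exact_mod_cast hbint
  -- build the (1/t)-SDF g
  set g : V → ℝ := fun u => if f u = c then 1 / t else f u with hgdef
  have h1t0 : (0:ℝ) < 1 / t := by positivity
  have h1t1 : (1:ℝ) / t < 1 := by rw [div_lt_one ht0]; linarith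
  have h1tc : (1:ℝ) / t < c := by
    rw [hcdef, div_lt_div_iff_of_pos_right ht0]; linarith
  have hvg : ∀ u, g u = 0 ∨ g u = 1 ∨ g u = 1 / t := by
    intro u
    rcases hf.1 u with h | h | h
    · left; simp [hgdef, h, (by linarith : (0:ℝ) ≠ c)]
    · right; left; simp [hgdef, h, (by linarith : (1:ℝ) ≠ c)]
    · right; right; simp [hgdef, h]
  have hgSDF : G.IsSDF (1 / t) g := by
    constructor
    · exact hvg
    · intro u
      rcases hf.1 u with h | h | h
      · rcases hf.2 u with hle | ⟨v, hadj, hv⟩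
        · rw [h] at hle; linarith
        · refine Or.inr ⟨v, hadj, ?_⟩
          rcases hf.1 v with hv' | hv' | hv'
          · rw [hv'] at hv; linarith
          · rw [hgdef]; simp only [hv', (by linarith : (1:ℝ) ≠ c), if_neg]
            simp [(by linarith : ¬ (1:ℝ) = c)]
          · rw [hv'] at hv; linarith
      · left
        have : g u = 1 := by simp [hgdef, h, (by linarith : ¬ (1:ℝ) = c)]
        rw [this]; linarith
      · left
        have : g u = 1 / t := by simp [hgdef, h]
        rw [this]
  have hfilter1 : (Finset.univ.filter fun u => g u = 1) = Finset.univ.filter fun u => f u = 1 := by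
    ext u
    simp only [Finset.mem_filter, Finset.mem_univ, true_and]
    by_cases hfc : f u = c
    · have : g u = 1 / t := by simp [hgdef, hfc]
      rw [this, hfc]
      constructor <;> intro h <;> linarith
    · have : g u = f u := by simp [hgdef, hfc]
      rw [this]
  have hfilter2 : (Finset.univ.filter fun u => g u = 1 / t) = Finset.univ.filter fun u => f u = c := by
    ext u
    simp only [Finset.mem_filter, Finset.mem_univ, true_and]
    by_cases hfc : f u = c
    · have : g u = 1 / t := by simp [hgdef, hfc]
      rw [this]
      simp [hfc]
    · have hg : g u = f u := by simp [hgdef, hfc]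
      rw [hg]
      constructor
      · intro h
        rcases hf.1 u with h' | h' | h'
        · rw [h'] at h; linarith
        · rw [h'] at h; linarith
        · exact absurd h' hfc
      · intro h; exact absurd h hfc
  have hsumg : ∑ u, g u = a + b * (1 / t) := by
    rw [sum_decomp (1 / t) h1t0.ne' h1t1.ne g hvg, hfilter1, hfilter2]
  have hle : G.selfDom (1 / t) ≤ a + b * (1 / t) := by
    apply csInf_le (sdf_set_bddBelow G (1 / t) h1t0.le)
    exact ⟨g, hgSDF, hsumg.symm⟩
  have hlt : (a:ℝ) + b * (1 / t) < a + q := by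
    have : (b:ℝ) * (1 / t) < q := by
      rw [mul_one_div, div_lt_iff₀ ht0]
      exact_mod_cast key
    linarith
  have : (⌊G.selfDom c⌋ : ℝ) = a + q := by rw [hfloor]; push_cast; ring
  rw [this]
  calc G.selfDom (1 / t) ≤ a + b * (1 / t) := hle
    _ < a + q := hlt
end

section
/- Let t ≥ 2 be an integer, let p ∈ (0,1), let n be a positive integer, and let m₁, m₂ be nonnegative integers with m₁ + m₂ ≤ n. For a graph G on vertex set Fin n, let X_{m₁,m₂}(G) be the number of (1/t)-self dominating functions f : Fin n → {0, 1, 1/t} of G with |{u : f(u) = 1}| = m₁ and |{u : f(u) = 1/t}| = m₂. Then the expectation of X_{m₁,m₂} with respect to μ_{n,p} equals n!/((n−m₁−m₂)!·m₁!·m₂!) · (1 − (1−p)^{m₁})^{n−m₁−m₂}. -/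
open Finset
open scoped Classical

open Filter

/-- The expectation of a random variable `X` under the Erdős–Rényi measure `μ_{n,p}`. -/
noncomputable def erExp (n : ℕ) (p : ℝ) (X : SimpleGraph (Fin n) → ℝ) : ℝ :=
  ∑ G : SimpleGraph (Fin n),
    (p ^ (Nat.card G.edgeSet) * (1 - p) ^ (n.choose 2 - Nat.card G.edgeSet)) * X G



lemma sum_fun_bool_prod {A : Type*} [Fintype A] [DecidableEq A] (W : A → Bool → ℝ) :
    ∑ h : A → Bool, ∏ a, W a (h a) = ∏ a, (W a true + W a false) := by
  rw [← Fintype.prod_sum (f := W)]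
  apply Finset.prod_congr rfl
  intro a _
  rw [Fintype.sum_bool]

lemma sum_fun_bool_weight {A : Type*} [Fintype A] [DecidableEq A] (p : ℝ) :
    ∑ h : A → Bool, ∏ a, (if h a then p else 1 - p) = 1 := by
  rw [sum_fun_bool_prod (fun _ b => if b then p else 1 - p)]
  simp

lemma sum_fun_bool_hit {A : Type*} [Fintype A] [DecidableEq A] (p : ℝ) :
    ∑ h : A → Bool, (if ∃ a, h a = true then (1:ℝ) else 0) * ∏ a, (if h a then p else 1 - p)
      = 1 - (1 - p) ^ Fintype.card A := by
  classical
  have key : ∀ h : A → Bool, (if ∃ a, h a = true then (1:ℝ) else 0)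
      = 1 - (if h = (fun _ => false) then 1 else 0) := by
    intro h
    by_cases hh : ∃ a, h a = true
    · rw [if_pos hh, if_neg, sub_zero]
      rintro rfl; simp at hh
    · rw [if_neg hh, if_pos, sub_self]
      funext a
      simpa using (not_exists.mp hh a)
  simp_rw [key, sub_mul, one_mul]
  rw [Finset.sum_sub_distrib, sum_fun_bool_weight]
  congr 1
  rw [Finset.sum_eq_single (fun _ => false)]
  · simp
  · intro h _ hne; rw [if_neg hne, zero_mul]
  · intro habs; exact absurd (Finset.mem_univ _) habs

lemma sum_pi_bool_prod {E B : Type*} [Fintype E] [Fintype B] [DecidableEq E] [DecidableEq B]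
    (π : E → B) (F : ∀ b, ({e : E // π e = b} → Bool) → ℝ) :
    ∑ g : E → Bool, ∏ b, F b (fun e => g e.1) = ∏ b, ∑ h : {e : E // π e = b} → Bool, F b h := by
  classical
  let e1 : (E → Bool) ≃ ∀ b, ({e : E // π e = b} → Bool) :=
    (Equiv.arrowCongr (Equiv.sigmaFiberEquiv π).symm (Equiv.refl Bool)).trans
      (Equiv.piCurry fun _ _ => Bool)
  rw [Fintype.sum_equiv e1 _ (fun h => ∏ b, F b (h b)) ?_]
  · rw [Fintype.prod_sum]
  · intro g
    apply Finset.prod_congr rfl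
    intro b _
    rfl

open Finset

noncomputable def gEquiv (n : ℕ) :
    SimpleGraph (Fin n) ≃ ({e : Sym2 (Fin n) // ¬ e.IsDiag} → Bool) := by
  classical
  exact {
    toFun := fun G e => if e.1 ∈ G.edgeSet then true else false
    invFun := fun g => SimpleGraph.fromEdgeSet {e | ∃ h : ¬ e.IsDiag, g ⟨e, h⟩ = true}
    left_inv := by
      intro G
      have hs : {e : Sym2 (Fin n) | ∃ h : ¬ e.IsDiag,
          (if e ∈ G.edgeSet then true else false) = true} = G.edgeSet := by
        ext e
        constructor
        · rintro ⟨h, he⟩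
          by_contra hc
          rw [if_neg hc] at he
          exact Bool.false_ne_true he
        · intro he
          exact ⟨G.not_isDiag_of_mem_edgeSet he, if_pos he⟩
      show SimpleGraph.fromEdgeSet _ = G
      rw [hs, SimpleGraph.fromEdgeSet_edgeSet]
    right_inv := by
      intro g
      funext e
      obtain ⟨e, he⟩ := e
      have : e ∈ (SimpleGraph.fromEdgeSet
          {e : Sym2 (Fin n) | ∃ h : ¬ e.IsDiag, g ⟨e, h⟩ = true}).edgeSet ↔ g ⟨e, he⟩ = true := by
        rw [SimpleGraph.edgeSet_fromEdgeSet, Set.mem_diff]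
        constructor
        · rintro ⟨⟨h, hg⟩, _⟩
          exact hg
        · intro hg
          exact ⟨⟨he, hg⟩, he⟩
      simp only [this]
      cases g ⟨e, he⟩ <;> simp }

lemma gEquiv_symm_card (n : ℕ) (g : {e : Sym2 (Fin n) // ¬ e.IsDiag} → Bool) :
    Nat.card ((gEquiv n).symm g).edgeSet = (univ.filter fun e => g e = true).card := by
  classical
  have h1 : ((gEquiv n).symm g).edgeSet
      = Subtype.val '' {e : {e : Sym2 (Fin n) // ¬ e.IsDiag} | g e = true} := by
    show (SimpleGraph.fromEdgeSet _).edgeSet = _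
    rw [SimpleGraph.edgeSet_fromEdgeSet]
    ext e
    simp only [Set.mem_diff, Set.mem_setOf_eq, Set.mem_image]
    constructor
    · rintro ⟨⟨h, hg⟩, _⟩
      exact ⟨⟨e, h⟩, hg, rfl⟩
    · rintro ⟨⟨e', he'⟩, hg, rfl⟩
      exact ⟨⟨he', hg⟩, he'⟩
  rw [Nat.card_coe_set_eq, h1, Set.ncard_image_of_injective _ Subtype.val_injective,
    Set.ncard_eq_toFinset_card', Set.toFinset_setOf]

lemma gEquiv_symm_adj (n : ℕ) (g : {e : Sym2 (Fin n) // ¬ e.IsDiag} → Bool) (u v : Fin n) :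
    ((gEquiv n).symm g).Adj u v ↔ (∃ h : ¬ (s(u,v) : Sym2 (Fin n)).IsDiag, g ⟨s(u,v), h⟩ = true) ∧ u ≠ v := by
  show (SimpleGraph.fromEdgeSet _).Adj u v ↔ _
  rw [SimpleGraph.fromEdgeSet_adj]
  rfl

open Finset

lemma measure_prod {n : ℕ} (p : ℝ) (g : {e : Sym2 (Fin n) // ¬ e.IsDiag} → Bool)
    (G : SimpleGraph (Fin n)) (hG : Nat.card G.edgeSet = (univ.filter fun e => g e = true).card) :
    p ^ (Nat.card G.edgeSet) * (1 - p) ^ (n.choose 2 - Nat.card G.edgeSet)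
      = ∏ e, (if g e then p else 1 - p) := by
  classical
  rw [Finset.prod_ite, Finset.prod_const, Finset.prod_const, hG]
  congr 2
  have := Finset.card_filter_add_card_filter_not
    (s := (univ : Finset {e : Sym2 (Fin n) // ¬ e.IsDiag})) (p := fun e => g e = true)
  have hcard : (univ : Finset {e : Sym2 (Fin n) // ¬ e.IsDiag}).card = n.choose 2 := by
    rw [Finset.card_univ, Sym2.card_subtype_not_diag, Fintype.card_fin]
  omega

def lab {n : ℕ} (S₁ T : Finset (Fin n)) (hST : S₁ ⊆ T) : Sym2 (Fin n) → Option (Fin n) :=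
  Sym2.lift ⟨fun a b => if a ∉ T ∧ b ∈ S₁ then some a else if b ∉ T ∧ a ∈ S₁ then some b
    else none, by
    intro a b
    dsimp only
    by_cases h1 : a ∉ T ∧ b ∈ S₁
    · rw [if_pos h1, if_neg (fun h2 => h2.1 (hST h1.2)), if_pos h1]
    · by_cases h2 : b ∉ T ∧ a ∈ S₁
      · rw [if_neg h1, if_pos h2, if_pos h2]
      · rw [if_neg h1, if_neg h2, if_neg h2, if_neg h1]⟩

lemma lab_edge {n : ℕ} {S₁ T : Finset (Fin n)} (hST : S₁ ⊆ T) {u v : Fin n}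
    (hu : u ∉ T) (hv : v ∈ S₁) : lab S₁ T hST s(u, v) = some u := by
  rw [lab, Sym2.lift_mk]
  exact if_pos ⟨hu, hv⟩

lemma lab_some {n : ℕ} {S₁ T : Finset (Fin n)} (hST : S₁ ⊆ T) {e : Sym2 (Fin n)} {u : Fin n}
    (h : lab S₁ T hST e = some u) : u ∉ T ∧ ∃ v ∈ S₁, e = s(u, v) := by
  induction e using Sym2.ind with
  | _ a b =>
    rw [lab, Sym2.lift_mk] at h
    dsimp only at h
    split_ifs at h with h1 h2
    · obtain rfl := Option.some.inj h
      exact ⟨h1.1, b, h1.2, rfl⟩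
    · obtain rfl := Option.some.inj h
      exact ⟨h2.1, a, h2.2, Sym2.eq_swap⟩

lemma fiber_card {n : ℕ} {S₁ T : Finset (Fin n)} (hST : S₁ ⊆ T) {u : Fin n} (hu : u ∉ T) :
    Fintype.card {e : {e : Sym2 (Fin n) // ¬ e.IsDiag} // lab S₁ T hST e.1 = some u}
      = S₁.card := by
  classical
  have hne : ∀ v : {v // v ∈ S₁}, u ≠ v.1 := by
    rintro v rfl
    exact hu (hST v.2)
  have hbij : Function.Bijective (fun v : {v // v ∈ S₁} =>
      (⟨⟨s(u, v.1), by rw [Sym2.mk_isDiag_iff]; exact hne v⟩, lab_edge hST hu v.2⟩ :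
        {e : {e : Sym2 (Fin n) // ¬ e.IsDiag} // lab S₁ T hST e.1 = some u})) := by
    constructor
    · intro v w hvw
      apply Subtype.ext
      have : (s(u, v.1) : Sym2 (Fin n)) = s(u, w.1) := congrArg (fun x => x.1.1) hvw
      exact (Sym2.congr_right).mp this
    · rintro ⟨⟨e, hd⟩, hl⟩
      obtain ⟨-, v, hv, rfl⟩ := lab_some hST hl
      exact ⟨⟨v, hv⟩, rfl⟩
  rw [← Fintype.card_of_bijective hbij, Fintype.card_coe]

lemma prob_dom {n : ℕ} (p : ℝ) (S₁ S₂ : Finset (Fin n)) (hd : Disjoint S₁ S₂) :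
    ∑ G : SimpleGraph (Fin n),
      (p ^ (Nat.card G.edgeSet) * (1 - p) ^ (n.choose 2 - Nat.card G.edgeSet)) *
        (if ∀ u, u ∉ S₁ → u ∉ S₂ → ∃ v ∈ S₁, G.Adj u v then (1:ℝ) else 0)
      = (1 - (1 - p) ^ S₁.card) ^ (n - (S₁.card + S₂.card)) := by
  classical
  set T : Finset (Fin n) := S₁ ∪ S₂ with hT
  have hST : S₁ ⊆ T := Finset.subset_union_left
  set π : {e : Sym2 (Fin n) // ¬ e.IsDiag} → Option (Fin n) := fun e => lab S₁ T hST e.1 with hπ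
  set Ind : ∀ b : Option (Fin n), ({e // π e = b} → Bool) → ℝ := fun b =>
    match b with
    | none => fun _ => 1
    | some u => fun h => if u ∈ T then 1 else if ∃ e, h e = true then 1 else 0
    with hInd
  set F : ∀ b : Option (Fin n), ({e // π e = b} → Bool) → ℝ :=
    fun b h => Ind b h * ∏ e, (if h e then p else 1 - p) with hF
  rw [← Equiv.sum_comp ((gEquiv n).symm) (fun G =>
      (p ^ (Nat.card G.edgeSet) * (1 - p) ^ (n.choose 2 - Nat.card G.edgeSet)) *
        (if ∀ u, u ∉ S₁ → u ∉ S₂ → ∃ v ∈ S₁, G.Adj u v then (1:ℝ) else 0))]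
  have hsummand : ∀ g : {e : Sym2 (Fin n) // ¬ e.IsDiag} → Bool,
      (p ^ (Nat.card ((gEquiv n).symm g).edgeSet) *
        (1 - p) ^ (n.choose 2 - Nat.card ((gEquiv n).symm g).edgeSet)) *
        (if ∀ u, u ∉ S₁ → u ∉ S₂ → ∃ v ∈ S₁, ((gEquiv n).symm g).Adj u v then (1:ℝ) else 0)
      = ∏ b : Option (Fin n), F b (fun e => g e.1) := by
    intro g
    have hcond : (∀ u, u ∉ S₁ → u ∉ S₂ → ∃ v ∈ S₁, ((gEquiv n).symm g).Adj u v)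
        ↔ ∀ u : Fin n, u ∉ T → ∃ e : {e // π e = some u}, g e.1 = true := by
      constructor
      · intro hc u hu
        rw [hT, Finset.mem_union] at hu
        push_neg at hu
        obtain ⟨v, hv, hadj⟩ := hc u hu.1 hu.2
        rw [gEquiv_symm_adj] at hadj
        obtain ⟨⟨hnd, hg⟩, -⟩ := hadj
        refine ⟨⟨⟨s(u, v), hnd⟩, ?_⟩, hg⟩
        show lab S₁ T hST s(u, v) = some u
        exact lab_edge hST (by rw [hT, Finset.mem_union]; push_neg; exact hu) hv
      · intro hc u hu1 hu2
        have hu : u ∉ T := by rw [hT, Finset.mem_union]; push_neg; exact ⟨hu1, hu2⟩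
        obtain ⟨⟨⟨e, hnd⟩, hl⟩, hg⟩ := hc u hu
        obtain ⟨-, v, hv, rfl⟩ := lab_some hST hl
        refine ⟨v, hv, ?_⟩
        rw [gEquiv_symm_adj]
        refine ⟨⟨hnd, hg⟩, ?_⟩
        intro huv
        exact hnd (by rw [Sym2.mk_isDiag_iff]; exact huv)
    have hcard : Nat.card ((gEquiv n).symm g).edgeSet
        = (univ.filter fun e => g e = true).card := gEquiv_symm_card n g
    rw [measure_prod p g _ hcard]
    have hindprod : (if ∀ u, u ∉ S₁ → u ∉ S₂ → ∃ v ∈ S₁, ((gEquiv n).symm g).Adj u v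
        then (1:ℝ) else 0) = ∏ b : Option (Fin n), Ind b (fun e => g e.1) := by
      rw [Fintype.prod_option]
      have hnone : Ind none (fun e : {e // π e = none} => g e.1) = 1 := rfl
      rw [hnone, one_mul]
      by_cases hc : ∀ u, u ∉ S₁ → u ∉ S₂ → ∃ v ∈ S₁, ((gEquiv n).symm g).Adj u v
      · rw [if_pos hc]
        symm
        apply Finset.prod_eq_one
        intro u _
        show (if u ∈ T then (1:ℝ) else if ∃ e : {e // π e = some u}, g e.1 = true then 1 else 0) = 1
        by_cases hu : u ∈ T
        · rw [if_pos hu]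
        · rw [if_neg hu, if_pos (hcond.mp hc u hu)]
      · rw [if_neg hc]
        symm
        rw [hcond, not_forall] at hc
        obtain ⟨u, hu⟩ := hc
        push_neg at hu
        apply Finset.prod_eq_zero (Finset.mem_univ u)
        show (if u ∈ T then (1:ℝ) else if ∃ e : {e // π e = some u}, g e.1 = true then 1 else 0) = 0
        rw [if_neg hu.1, if_neg (not_exists.mpr hu.2)]
    have hwprod : ∏ e, (if g e then p else 1 - p)
        = ∏ b : Option (Fin n), ∏ e : {e // π e = b}, (if g e.1 then p else 1 - p) := by
      rw [← Equiv.prod_comp (Equiv.sigmaFiberEquiv π)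
        (fun e => if g e then p else 1 - p), ← Finset.univ_sigma_univ, Finset.prod_sigma]
      rfl
    rw [hindprod, hwprod, ← Finset.prod_mul_distrib]
    exact Finset.prod_congr rfl (fun b _ => mul_comm _ _)
  rw [Finset.sum_congr rfl (fun g _ => hsummand g), sum_pi_bool_prod π F,
    Fintype.prod_option]
  have hnone : ∑ h : {e // π e = none} → Bool, F none h = 1 := by
    have : ∀ h : {e // π e = none} → Bool, F none h = ∏ e, (if h e then p else 1 - p) := by
      intro h; rw [hF]; dsimp only; rw [hInd]; dsimp only; rw [one_mul]
    rw [Finset.sum_congr rfl (fun h _ => this h), sum_fun_bool_weight]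
  have hsome : ∀ u : Fin n, ∑ h : {e // π e = some u} → Bool, F (some u) h
      = if u ∈ T then 1 else 1 - (1 - p) ^ S₁.card := by
    intro u
    by_cases hu : u ∈ T
    · rw [if_pos hu]
      have : ∀ h : {e // π e = some u} → Bool, F (some u) h
          = ∏ e, (if h e then p else 1 - p) := by
        intro h; rw [hF]; dsimp only; rw [hInd]; dsimp only; rw [if_pos hu, one_mul]
      rw [Finset.sum_congr rfl (fun h _ => this h), sum_fun_bool_weight]
    · rw [if_neg hu]
      have : ∀ h : {e // π e = some u} → Bool, F (some u) h
          = (if ∃ e, h e = true then (1:ℝ) else 0) * ∏ e, (if h e then p else 1 - p) := by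
        intro h; rw [hF]; dsimp only; rw [hInd]; dsimp only; rw [if_neg hu]
      rw [Finset.sum_congr rfl (fun h _ => this h), sum_fun_bool_hit, fiber_card hST hu]
  rw [hnone, one_mul, Finset.prod_congr rfl (fun u _ => hsome u)]
  rw [Finset.prod_ite, Finset.prod_const, Finset.prod_const, one_pow, one_mul]
  congr 1
  have h1 : (univ.filter fun u : Fin n => u ∈ T).card = T.card := by
    simp
  have h2 := Finset.card_filter_add_card_filter_not
    (s := (univ : Finset (Fin n))) (p := fun u => u ∈ T)
  have h3 : T.card = S₁.card + S₂.card := Finset.card_union_of_disjoint hd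
  have h4 : (univ : Finset (Fin n)).card = n := by simp
  omega

def Phi {n : ℕ} (c : ℝ) (x : Finset (Fin n) × Finset (Fin n)) : Fin n → ℝ :=
  fun u => if u ∈ x.1 then 1 else if u ∈ x.2 then c else 0

lemma count_sdf {n : ℕ} (c : ℝ) (hc0 : 0 < c) (hc1 : c < 1) (G : SimpleGraph (Fin n))
    (m₁ m₂ : ℕ) :
    ({f : Fin n → ℝ | G.IsSDF c f ∧ {u | f u = 1}.ncard = m₁ ∧ {u | f u = c}.ncard = m₂}.ncard : ℝ)
      = ∑ S₁ ∈ univ.powersetCard m₁, ∑ S₂ ∈ univ.powersetCard m₂,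
          (if Disjoint S₁ S₂ ∧ (∀ u, u ∉ S₁ → u ∉ S₂ → ∃ v ∈ S₁, G.Adj u v)
            then (1:ℝ) else 0) := by
  classical
  set PF : Finset (Finset (Fin n) × Finset (Fin n)) :=
    ((univ.powersetCard m₁ ×ˢ univ.powersetCard m₂).filter
      (fun x => Disjoint x.1 x.2 ∧ ∀ u, u ∉ x.1 → u ∉ x.2 → ∃ v ∈ x.1, G.Adj u v)) with hPF
  have hset : {f : Fin n → ℝ | G.IsSDF c f ∧ {u | f u = 1}.ncard = m₁ ∧
      {u | f u = c}.ncard = m₂} = Phi c '' ↑PF := by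
    ext f
    simp only [Set.mem_setOf_eq, Set.mem_image, Finset.mem_coe, hPF, Finset.mem_filter,
      Finset.mem_product, Finset.mem_powersetCard_univ]
    constructor
    · rintro ⟨⟨hval, hdom⟩, h1, h2⟩
      set S₁ : Finset (Fin n) := univ.filter (fun u => f u = 1) with hS₁
      set S₂ : Finset (Fin n) := univ.filter (fun u => f u = c) with hS₂
      have hcS₁ : (↑S₁ : Set (Fin n)) = {u | f u = 1} := by
        ext u; simp [hS₁]
      have hcS₂ : (↑S₂ : Set (Fin n)) = {u | f u = c} := by
        ext u; simp [hS₂]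
      have hm1 : S₁.card = m₁ := by rw [← h1, ← hcS₁, Set.ncard_coe_finset]
      have hm2 : S₂.card = m₂ := by rw [← h2, ← hcS₂, Set.ncard_coe_finset]
      refine ⟨(S₁, S₂), ⟨⟨hm1, hm2⟩, ?_, ?_⟩, ?_⟩
      · rw [Finset.disjoint_left]
        intro u hu1 hu2
        rw [hS₁, Finset.mem_filter] at hu1
        rw [hS₂, Finset.mem_filter] at hu2
        exact hc1.ne (hu2.2.symm.trans hu1.2)
      · intro u hu1 hu2
        rw [hS₁, Finset.mem_filter] at hu1
        rw [hS₂, Finset.mem_filter] at hu2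
        push_neg at hu1 hu2
        have hf0 : f u = 0 := by
          rcases hval u with h | h | h
          · exact h
          · exact absurd h (hu1 (Finset.mem_univ u))
          · exact absurd h (hu2 (Finset.mem_univ u))
        rcases hdom u with h | ⟨v, hadj, hfv⟩
        · rw [hf0] at h; linarith
        · refine ⟨v, ?_, hadj⟩
          rw [hS₁, Finset.mem_filter]
          refine ⟨Finset.mem_univ v, ?_⟩
          rcases hval v with h | h | h
          · rw [h] at hfv; linarith
          · exact h
          · rw [h] at hfv; linarith
      · funext u
        rw [Phi]
        dsimp only
        by_cases hu1 : u ∈ S₁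
        · rw [if_pos hu1]
          exact ((Finset.mem_filter.mp hu1).2).symm
        · rw [if_neg hu1]
          by_cases hu2 : u ∈ S₂
          · rw [if_pos hu2]
            exact ((Finset.mem_filter.mp hu2).2).symm
          · rw [if_neg hu2]
            rw [hS₁] at hu1; rw [hS₂] at hu2
            simp only [Finset.mem_filter, Finset.mem_univ, true_and] at hu1 hu2
            rcases hval u with h | h | h
            · exact h.symm
            · exact absurd h hu1
            · exact absurd h hu2
    · rintro ⟨⟨S₁, S₂⟩, ⟨⟨hm1, hm2⟩, hdisj, hdom⟩, rfl⟩
      have hval1 : ∀ u, u ∈ S₁ → Phi c (S₁, S₂) u = 1 := fun u hu => if_pos hu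
      have hval2 : ∀ u, u ∉ S₁ → u ∈ S₂ → Phi c (S₁, S₂) u = c := by
        intro u hu1 hu2; rw [Phi]; dsimp only; rw [if_neg hu1, if_pos hu2]
      have hval0 : ∀ u, u ∉ S₁ → u ∉ S₂ → Phi c (S₁, S₂) u = 0 := by
        intro u hu1 hu2; rw [Phi]; dsimp only; rw [if_neg hu1, if_neg hu2]
      have hset1 : {u | Phi c (S₁, S₂) u = 1} = ↑S₁ := by
        ext u
        simp only [Set.mem_setOf_eq, Finset.mem_coe]
        constructor
        · intro h
          by_contra hu1
          by_cases hu2 : u ∈ S₂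
          · rw [hval2 u hu1 hu2] at h; exact hc1.ne h
          · rw [hval0 u hu1 hu2] at h; exact one_ne_zero h.symm
        · exact hval1 u
      have hset2 : {u | Phi c (S₁, S₂) u = c} = ↑S₂ := by
        ext u
        simp only [Set.mem_setOf_eq, Finset.mem_coe]
        constructor
        · intro h
          by_cases hu1 : u ∈ S₁
          · rw [hval1 u hu1] at h; exact absurd h.symm hc1.ne
          · by_contra hu2
            rw [hval0 u hu1 hu2] at h; exact hc0.ne h
        · intro hu2
          have hu1 : u ∉ S₁ := fun hu1 => (Finset.disjoint_left.mp hdisj hu1) hu2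
          exact hval2 u hu1 hu2
      refine ⟨⟨?_, ?_⟩, ?_, ?_⟩
      · intro u
        rw [Phi]; dsimp only
        by_cases hu1 : u ∈ S₁
        · rw [if_pos hu1]; right; left; rfl
        · rw [if_neg hu1]
          by_cases hu2 : u ∈ S₂
          · rw [if_pos hu2]; right; right; rfl
          · rw [if_neg hu2]; left; rfl
      · intro u
        by_cases hu1 : u ∈ S₁
        · left; rw [hval1 u hu1]; linarith
        · by_cases hu2 : u ∈ S₂
          · left; rw [hval2 u hu1 hu2]
          · obtain ⟨v, hv, hadj⟩ := hdom u hu1 hu2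
            right; exact ⟨v, hadj, le_of_eq (hval1 v hv).symm⟩
      · rw [hset1, Set.ncard_coe_finset, hm1]
      · rw [hset2, Set.ncard_coe_finset, hm2]
  have hinj : Set.InjOn (Phi c) (↑PF : Set (Finset (Fin n) × Finset (Fin n))) := by
    intro x hx y hy hxy
    rw [Finset.mem_coe, hPF, Finset.mem_filter] at hx hy
    have hmem1 : ∀ z : Finset (Fin n) × Finset (Fin n), Disjoint z.1 z.2 →
        ∀ u, (u ∈ z.1 ↔ Phi c z u = 1) := by
      intro z hz u
      constructor
      · intro hu; exact if_pos hu
      · intro h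
        by_contra hu1
        rw [Phi] at h
        rw [if_neg hu1] at h
        by_cases hu2 : u ∈ z.2
        · rw [if_pos hu2] at h; exact hc1.ne h
        · rw [if_neg hu2] at h; exact one_ne_zero h.symm
    have hmem2 : ∀ z : Finset (Fin n) × Finset (Fin n), Disjoint z.1 z.2 →
        ∀ u, (u ∈ z.2 ↔ Phi c z u = c) := by
      intro z hz u
      constructor
      · intro hu
        have hu1 : u ∉ z.1 := Finset.disjoint_right.mp hz hu
        rw [Phi]; rw [if_neg hu1, if_pos hu]
      · intro h
        rw [Phi] at h
        by_cases hu1 : u ∈ z.1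
        · rw [if_pos hu1] at h; exact absurd h.symm hc1.ne
        · rw [if_neg hu1] at h
          by_contra hu2
          rw [if_neg hu2] at h; exact hc0.ne h
    have h1 : x.1 = y.1 := by
      ext u
      rw [hmem1 x hx.2.1 u, hmem1 y hy.2.1 u, hxy]
    have h2 : x.2 = y.2 := by
      ext u
      rw [hmem2 x hx.2.1 u, hmem2 y hy.2.1 u, hxy]
    exact Prod.ext h1 h2
  rw [hset, Set.ncard_image_of_injOn hinj, Set.ncard_coe_finset, hPF, Finset.card_filter]
  rw [Finset.sum_product]
  push_cast
  rfl

theorem stmt_9 (t : ℕ) (ht : 2 ≤ t) (p : ℝ) (hp : p ∈ Set.Ioo (0 : ℝ) 1)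
    (n : ℕ) (hn : 1 ≤ n) (m₁ m₂ : ℕ) (hm : m₁ + m₂ ≤ n) :
    erExp n p (fun G =>
      ({f : Fin n → ℝ | G.IsSDF (1 / (t : ℝ)) f ∧
          {u | f u = 1}.ncard = m₁ ∧ {u | f u = 1 / (t : ℝ)}.ncard = m₂}.ncard : ℝ)) =
      (n.factorial : ℝ) /
          ((n - m₁ - m₂).factorial * m₁.factorial * m₂.factorial) *
        (1 - (1 - p) ^ m₁) ^ (n - m₁ - m₂) := by
  classical
  have ht' : (2:ℝ) ≤ (t:ℝ) := by exact_mod_cast ht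
  have hc0 : 0 < 1 / (t:ℝ) := div_pos one_pos (by linarith)
  have hc1 : 1 / (t:ℝ) < 1 := by
    rw [div_lt_one (by linarith)]; linarith
  rw [erExp]
  rw [Finset.sum_congr rfl (fun G _ => by
    rw [count_sdf (1 / (t:ℝ)) hc0 hc1 G m₁ m₂])]
  simp_rw [Finset.mul_sum]
  rw [Finset.sum_comm]
  rw [Finset.sum_congr rfl (fun S₁ _ => Finset.sum_comm)]
  have hinner : ∀ S₁ ∈ Finset.univ.powersetCard m₁, ∀ S₂ ∈ Finset.univ.powersetCard m₂,
      (∑ G : SimpleGraph (Fin n),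
        (p ^ (Nat.card G.edgeSet) * (1 - p) ^ (n.choose 2 - Nat.card G.edgeSet)) *
          (if Disjoint S₁ S₂ ∧ (∀ u, u ∉ S₁ → u ∉ S₂ → ∃ v ∈ S₁, G.Adj u v)
            then (1:ℝ) else 0))
      = if Disjoint S₁ S₂ then (1 - (1 - p) ^ m₁) ^ (n - m₁ - m₂) else 0 := by
    intro S₁ hS₁ S₂ hS₂
    rw [Finset.mem_powersetCard_univ] at hS₁ hS₂
    by_cases hdisj : Disjoint S₁ S₂
    · rw [if_pos hdisj]
      have : ∀ G : SimpleGraph (Fin n),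
          (if Disjoint S₁ S₂ ∧ (∀ u, u ∉ S₁ → u ∉ S₂ → ∃ v ∈ S₁, G.Adj u v)
            then (1:ℝ) else 0)
          = (if (∀ u, u ∉ S₁ → u ∉ S₂ → ∃ v ∈ S₁, G.Adj u v) then (1:ℝ) else 0) := by
        intro G; simp [hdisj]
      rw [Finset.sum_congr rfl (fun G _ => by rw [this G]), prob_dom p S₁ S₂ hdisj,
        hS₁, hS₂, Nat.sub_sub]
    · rw [if_neg hdisj]
      apply Finset.sum_eq_zero
      intro G _
      rw [if_neg (fun h => hdisj h.1), mul_zero]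
  rw [Finset.sum_congr rfl (fun S₁ hS₁ =>
    Finset.sum_congr rfl (fun S₂ hS₂ => hinner S₁ hS₁ S₂ hS₂))]
  have hsub : ∀ S₁ : Finset (Fin n), S₁ ∈ Finset.univ.powersetCard m₁ →
      (∑ S₂ ∈ Finset.univ.powersetCard m₂,
        if Disjoint S₁ S₂ then (1 - (1 - p) ^ m₁) ^ (n - m₁ - m₂) else 0)
      = ((n - m₁).choose m₂ : ℝ) * (1 - (1 - p) ^ m₁) ^ (n - m₁ - m₂) := by
    intro S₁ hS₁
    rw [Finset.mem_powersetCard_univ] at hS₁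
    rw [← Finset.sum_filter]
    have hfil : (Finset.univ.powersetCard m₂).filter (fun S₂ => Disjoint S₁ S₂)
        = Finset.powersetCard m₂ S₁ᶜ := by
      ext S₂
      rw [Finset.mem_filter, Finset.mem_powersetCard_univ, Finset.mem_powersetCard]
      constructor
      · rintro ⟨h1, h2⟩
        refine ⟨?_, h1⟩
        intro u hu
        rw [Finset.mem_compl]
        exact fun h => Finset.disjoint_left.mp h2 h hu
      · rintro ⟨h1, h2⟩
        refine ⟨h2, ?_⟩
        rw [Finset.disjoint_left]
        intro a ha ha2
        exact (Finset.mem_compl.mp (h1 ha2)) ha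
    rw [hfil, Finset.sum_const, Finset.card_powersetCard, Finset.card_compl,
      Fintype.card_fin, hS₁, nsmul_eq_mul]
  rw [Finset.sum_congr rfl hsub, Finset.sum_const, Finset.card_powersetCard,
    Finset.card_univ, Fintype.card_fin, nsmul_eq_mul]
  have h1 : m₁ ≤ n := le_trans (Nat.le_add_right _ _) hm
  have h2 : m₂ ≤ n - m₁ := by omega
  have e1 := Nat.choose_mul_factorial_mul_factorial h1
  have e2 := Nat.choose_mul_factorial_mul_factorial h2
  have key : n.choose m₁ * ((n - m₁).choose m₂) *
      ((n - m₁ - m₂).factorial * m₁.factorial * m₂.factorial) = n.factorial := by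
    calc n.choose m₁ * ((n - m₁).choose m₂) *
        ((n - m₁ - m₂).factorial * m₁.factorial * m₂.factorial)
        = (n.choose m₁ * m₁.factorial) *
          ((n - m₁).choose m₂ * m₂.factorial * (n - m₁ - m₂).factorial) := by ring
      _ = n.choose m₁ * m₁.factorial * (n - m₁).factorial := by rw [e2]
      _ = n.factorial := e1
  have hD : ((n - m₁ - m₂).factorial : ℝ) * m₁.factorial * m₂.factorial ≠ 0 := by
    have := Nat.factorial_pos (n - m₁ - m₂)
    have := Nat.factorial_pos m₁
    have := Nat.factorial_pos m₂
    positivity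
  have hfac : (n.factorial : ℝ) /
      ((n - m₁ - m₂).factorial * m₁.factorial * m₂.factorial)
      = (n.choose m₁ : ℝ) * ((n - m₁).choose m₂) := by
    rw [div_eq_iff hD]
    exact_mod_cast key.symm
  rw [hfac]
  ring
end

section
/- Let p ∈ (0,1) and let t ≥ 2 be an integer. Let n ≥ 2 be an integer such that a_p(n) ≥ 1 and t·a_p(n) ≤ n, and let m₁, m₂ be nonnegative integers with a_p(n) − 1 < m₁ + m₂/t ≤ a_p(n) (so in particular 1 ≤ m₁ + m₂ ≤ n). Then n!/((n−m₁−m₂)!·m₁!·m₂!) · (1 − (1−p)^{m₁})^{n−m₁−m₂} < exp[ (m₁+m₂)·(ln n + 2) − L(n)·ln n / (1−p)^{a_p(n)−m₁} ]. -/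
set_option maxHeartbeats 800000


/-- `L(x) = log_{1/(1-p)} x`. -/
noncomputable def Lp (p : ℝ) (x : ℝ) : ℝ := Real.logb (1 / (1 - p)) x

/-- `a_p(n) = log_{1/(1-p)} ( n / (log_{1/(1-p)} n · ln n) )`. -/
noncomputable def apn (p : ℝ) (n : ℕ) : ℝ :=
  Real.logb (1 / (1 - p)) ((n : ℝ) / (Real.logb (1 / (1 - p)) n * Real.log n))

theorem stmt_11 (p : ℝ) (hp : p ∈ Set.Ioo (0 : ℝ) 1) (t : ℕ) (ht : 2 ≤ t)
    (n : ℕ) (hn : 2 ≤ n) (ha : 1 ≤ apn p n) (htn : (t : ℝ) * apn p n ≤ n)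
    (m₁ m₂ : ℕ) (hlow : apn p n - 1 < (m₁ : ℝ) + (m₂ : ℝ) / t)
    (hhigh : (m₁ : ℝ) + (m₂ : ℝ) / t ≤ apn p n) :
    (n.factorial : ℝ) / ((n - m₁ - m₂).factorial * m₁.factorial * m₂.factorial) *
        (1 - (1 - p) ^ m₁) ^ (n - m₁ - m₂) <
      Real.exp (((m₁ : ℝ) + m₂) * (Real.log n + 2) -
        Lp p n * Real.log n / (1 - p) ^ (apn p n - (m₁ : ℝ))) := by
  obtain ⟨hp0, hp1⟩ := hp
  have hq0 : (0:ℝ) < 1 - p := by linarith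
  have hq1 : 1 - p < 1 := by linarith
  set q : ℝ := 1 - p with hq
  set a : ℝ := apn p n with hadef
  have hb1 : (1:ℝ) < 1 / q := by
    rw [lt_div_iff₀ hq0]; linarith
  have hnR : (2:ℝ) ≤ (n:ℝ) := by exact_mod_cast hn
  have hlogn : 0 < Real.log n := Real.log_pos (by linarith)
  have hL : 0 < Lp p n := Real.logb_pos hb1 (by linarith)
  -- k = m₁ + m₂
  set k := m₁ + m₂ with hk
  have htR : (2:ℝ) ≤ (t:ℝ) := by exact_mod_cast ht
  have ht0 : (0:ℝ) < t := by linarith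
  have hk1 : 1 ≤ k := by
    rcases Nat.eq_zero_or_pos k with h0 | h
    · exfalso
      have hm1 : m₁ = 0 := by omega
      have hm2 : m₂ = 0 := by omega
      rw [hm1, hm2] at hlow
      simp at hlow
      linarith
    · exact h
  have hkRn : ((k:ℝ)) ≤ (n:ℝ) := by
    have h1 : (m₁:ℝ) + (m₂:ℝ) ≤ (t:ℝ) * ((m₁:ℝ) + (m₂:ℝ)/t) := by
      rw [mul_add, mul_div_cancel₀ _ (ne_of_gt ht0)]
      nlinarith [Nat.cast_nonneg (α := ℝ) m₁]
    have h2 : (t:ℝ) * ((m₁:ℝ) + (m₂:ℝ)/t) ≤ (t:ℝ) * a :=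
      mul_le_mul_of_nonneg_left hhigh (by linarith)
    rw [hk]
    push_cast
    linarith
  have hkn : k ≤ n := by exact_mod_cast hkRn
  have hsub : n - m₁ - m₂ = n - k := by omega
  rw [hsub]
  -- rewrite the rpow term
  have hx : (0:ℝ) < (n:ℝ) / (Lp p n * Real.log n) := by positivity
  have hba : (1/q) ^ a = (n:ℝ) / (Lp p n * Real.log n) := by
    rw [hadef, apn]
    exact Real.rpow_logb (by positivity) (ne_of_gt hb1) hx
  have hqa : q ^ a = Lp p n * Real.log n / n := by
    have : ((q:ℝ)⁻¹) ^ a = (q ^ a)⁻¹ := Real.inv_rpow hq0.le a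
    rw [one_div] at hba
    rw [this] at hba
    rw [inv_eq_iff_eq_inv] at hba
    rw [hba, inv_div]
  have hqm : q ^ ((m₁:ℝ)) = q ^ m₁ := Real.rpow_natCast q m₁
  have hdiv : Lp p n * Real.log n / q ^ (a - (m₁:ℝ)) = (n:ℝ) * q ^ m₁ := by
    rw [Real.rpow_sub hq0, hqa, hqm]
    have hqmpos : (0:ℝ) < q ^ m₁ := pow_pos hq0 m₁
    field_simp
  rw [hdiv]
  -- bound LHS
  have hfac : (n.factorial : ℝ) ≤ (n - k).factorial * (n:ℝ)^k := by
    have := Nat.factorial_mul_descFactorial hkn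
    have hd := Nat.descFactorial_le_pow n k
    have : n.factorial ≤ (n-k).factorial * n ^ k := by
      calc n.factorial = (n-k).factorial * n.descFactorial k :=
            (Nat.factorial_mul_descFactorial hkn).symm
        _ ≤ (n-k).factorial * n ^ k := Nat.mul_le_mul_left _ hd
    exact_mod_cast this
  have hfacden : (1:ℝ) ≤ (m₁.factorial : ℝ) * m₂.factorial := by
    have := Nat.one_le_iff_ne_zero.2 (Nat.mul_ne_zero m₁.factorial_ne_zero m₂.factorial_ne_zero)
    exact_mod_cast this
  have hdpos : (0:ℝ) < ((n-k).factorial : ℝ) := by positivity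
  have hA : (n.factorial : ℝ) / ((n-k).factorial * m₁.factorial * m₂.factorial)
      ≤ (n:ℝ)^k := by
    rw [div_le_iff₀ (by positivity)]
    calc (n.factorial : ℝ) ≤ (n - k).factorial * (n:ℝ)^k := hfac
      _ ≤ (n:ℝ)^k * (((n-k).factorial : ℝ) * m₁.factorial * m₂.factorial) := by
          nlinarith [pow_pos (show (0:ℝ) < n by linarith) k]
  have hbase0 : (0:ℝ) ≤ 1 - q ^ m₁ := by
    have : q ^ m₁ ≤ 1 := pow_le_one₀ hq0.le hq1.le
    linarith
  have hqm1pos : (0:ℝ) < q ^ m₁ := pow_pos hq0 m₁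
  have hB : (1 - q ^ m₁) ^ (n - k) ≤ Real.exp (-((n:ℝ) - k) * q ^ m₁) := by
    have h1 : 1 - q ^ m₁ ≤ Real.exp (-(q ^ m₁)) := by
      have := Real.add_one_le_exp (-(q ^ m₁))
      linarith
    calc (1 - q ^ m₁) ^ (n - k) ≤ (Real.exp (-(q ^ m₁))) ^ (n - k) :=
          pow_le_pow_left₀ hbase0 h1 _
      _ = Real.exp (-((n:ℝ) - k) * q ^ m₁) := by
          rw [← Real.exp_nat_mul]
          congr 1
          have : ((n - k : ℕ) : ℝ) = (n:ℝ) - k := by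
            push_cast [Nat.cast_sub hkn]; ring
          rw [this]; ring
  have hLHS : (n.factorial : ℝ) / ((n-k).factorial * m₁.factorial * m₂.factorial) *
      (1 - q ^ m₁) ^ (n - k) ≤ (n:ℝ)^k * Real.exp (-((n:ℝ) - k) * q ^ m₁) := by
    apply mul_le_mul hA hB (by positivity) (by positivity)
  have hnk : (n:ℝ)^k = Real.exp ((k:ℝ) * Real.log n) := by
    rw [← Real.exp_log (show (0:ℝ) < (n:ℝ)^k by positivity), Real.log_pow]
  calc (n.factorial : ℝ) / ((n-k).factorial * m₁.factorial * m₂.factorial) *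
      (1 - q ^ m₁) ^ (n - k) ≤ (n:ℝ)^k * Real.exp (-((n:ℝ) - k) * q ^ m₁) := hLHS
    _ = Real.exp ((k:ℝ) * Real.log n + (-((n:ℝ) - k) * q ^ m₁)) := by
        rw [hnk, ← Real.exp_add]
    _ < Real.exp (((m₁:ℝ) + m₂) * (Real.log n + 2) - (n:ℝ) * q ^ m₁) := by
        apply Real.exp_lt_exp.2
        have hkR1 : (1:ℝ) ≤ (k:ℝ) := by exact_mod_cast hk1
        have hcast : (m₁:ℝ) + (m₂:ℝ) = (k:ℝ) := by push_cast [hk]; ring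
        rw [hcast]
        have hqle : q ^ m₁ ≤ 1 := pow_le_one₀ hq0.le hq1.le
        nlinarith
end

section
/- Let p ∈ (0,1) and let t ≥ 2 be an integer. Let n ≥ 2 be an integer such that a_p(n) ≥ 1, t·a_p(n) ≤ n, and L(n)·ln n > 1, and let m₁, m₂ be nonnegative integers with a_p(n) − 1 < m₁ + m₂/t ≤ a_p(n) and with (1−p)^{a_p(n)−m₁} < 1/t. Then n!/((n−m₁−m₂)!·m₁!·m₂!) · (1 − (1−p)^{m₁})^{n−m₁−m₂} < exp[ t·( 2·L(n) − L(L(n)·ln n)·ln n ) ]. -/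
lemma key_ineq (t A Λ ℓ N K q : ℝ) (htpos : 0 < t) (hℓ : 0 < ℓ) (hΛpos : 0 < Λ)
    (hNpos : 0 < N) (hKta : K ≤ t * A) (hAΛ : A < Λ)
    (hq : t * (Λ * ℓ / N) < q) (ht2 : t * A * ℓ < N) (hNK : 0 ≤ N - K) :
    K * ℓ - q * (N - K) < t * (2 * Λ - (Λ - A) * ℓ) := by
  set β : ℝ := Λ * ℓ / N with hβdef
  have hβpos : 0 < β := div_pos (mul_pos hΛpos hℓ) hNpos
  have hβN : β * N = Λ * ℓ := div_mul_cancel₀ _ hNpos.ne'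
  have h3 : t * β * (N - K) ≤ q * (N - K) := mul_le_mul_of_nonneg_right hq.le hNK
  have h4 : K * ℓ ≤ t * A * ℓ := mul_le_mul_of_nonneg_right hKta hℓ.le
  have h5 : t * β * K ≤ t * β * (t * A) :=
    mul_le_mul_of_nonneg_left hKta (mul_pos htpos hβpos).le
  have h6 : t * β * (t * A) < t * Λ := by
    have he : t * β * (t * A) = (t * Λ) * (t * A * ℓ / N) := by
      rw [hβdef]; field_simp
    rw [he]
    exact mul_lt_of_lt_one_right (mul_pos htpos hΛpos) ((div_lt_one hNpos).mpr ht2)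
  have h8 : t * β * (N - K) = t * (Λ * ℓ) - t * β * K := by
    have hh : t * β * N = t * (Λ * ℓ) := by rw [mul_assoc, hβN]
    linarith [hh, mul_sub (t*β) N K]
  have h9 : (0:ℝ) < t * Λ := mul_pos htpos hΛpos
  nlinarith [h3, h4, h5, h6, h8, h9]

set_option maxHeartbeats 1000000 in
theorem stmt_12 (p : ℝ) (hp : p ∈ Set.Ioo (0 : ℝ) 1) (t : ℕ) (ht : 2 ≤ t)
    (n : ℕ) (hn : 2 ≤ n) (ha : 1 ≤ apn p n) (htn : (t : ℝ) * apn p n ≤ n)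
    (hL : 1 < Lp p n * Real.log n)
    (m₁ m₂ : ℕ) (hlow : apn p n - 1 < (m₁ : ℝ) + (m₂ : ℝ) / t)
    (hhigh : (m₁ : ℝ) + (m₂ : ℝ) / t ≤ apn p n)
    (hm₁ : (1 - p) ^ (apn p n - (m₁ : ℝ)) < 1 / (t : ℝ)) :
    (n.factorial : ℝ) / ((n - m₁ - m₂).factorial * m₁.factorial * m₂.factorial) *
        (1 - (1 - p) ^ m₁) ^ (n - m₁ - m₂) <
      Real.exp ((t : ℝ) * (2 * Lp p n - Lp p (Lp p n * Real.log n) * Real.log n)) := by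
  obtain ⟨hp0, hp1⟩ := hp
  have h1p : (0:ℝ) < 1 - p := by linarith
  have h1p1 : 1 - p < 1 := by linarith
  set b : ℝ := 1 / (1 - p) with hbdef
  have hb1 : 1 < b := by rw [hbdef, lt_div_iff₀ h1p]; linarith
  have hbpos : 0 < b := lt_trans one_pos hb1
  have hbne1 : b ≠ 1 := ne_of_gt hb1
  have hN1 : (1:ℝ) < (n:ℝ) := by exact_mod_cast hn
  have hNpos : (0:ℝ) < (n:ℝ) := lt_trans one_pos hN1
  have hℓ : 0 < Real.log n := Real.log_pos hN1
  set ℓ : ℝ := Real.log n with hldef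
  set Λ : ℝ := Lp p n with hΛdef
  have hΛpos : 0 < Λ := Real.logb_pos hb1 hN1
  have hΛℓ : 1 < Λ * ℓ := hL
  have hΛℓpos : 0 < Λ * ℓ := lt_trans one_pos hΛℓ
  set A : ℝ := apn p n with hAdef
  have hApos : 0 < A := lt_of_lt_of_le one_pos ha
  have htpos : (0:ℝ) < (t:ℝ) := by exact_mod_cast Nat.lt_of_lt_of_le two_pos ht
  have ht1 : (1:ℝ) ≤ (t:ℝ) := by exact_mod_cast Nat.one_le_of_lt ht
  -- A = Λ - logb b (Λℓ)
  have hAeq : A = Λ - Real.logb b (Λ * ℓ) := by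
    rw [hAdef, apn, ← hldef, ← hbdef]
    rw [show Real.logb b (n:ℝ) = Λ from rfl]
    rw [Real.logb_div (ne_of_gt hNpos) (ne_of_gt hΛℓpos)]
    rfl
  have hAΛ : A < Λ := by
    have := Real.logb_pos hb1 hΛℓ
    linarith [hAeq]
  -- β = (1-p)^A = Λℓ/N
  have hinv : b⁻¹ = 1 - p := by rw [hbdef]; field_simp
  have hβ : (1 - p) ^ A = Λ * ℓ / n := by
    rw [← hinv, Real.inv_rpow (le_of_lt hbpos)]
    rw [hAdef, apn, ← hldef, ← hbdef]
    rw [show Real.logb b (n:ℝ) = Λ from rfl]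
    rw [Real.rpow_logb hbpos hbne1 (div_pos hNpos hΛℓpos)]
    rw [inv_div]
  set q : ℝ := (1 - p) ^ m₁ with hqdef
  have hqpos : 0 < q := pow_pos h1p m₁
  have hqle1 : q ≤ 1 := pow_le_one₀ (le_of_lt h1p) (le_of_lt h1p1)
  have hsplit : (1 - p) ^ (A - (m₁:ℝ)) = (Λ * ℓ / n) / q := by
    rw [Real.rpow_sub h1p, Real.rpow_natCast, hβ, ← hqdef]
  rw [hsplit] at hm₁
  set β : ℝ := Λ * ℓ / n with hβdef
  have hβpos : 0 < β := div_pos hΛℓpos hNpos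
  -- fact 2: t * β < q
  have hfact2 : (t:ℝ) * β < q := by
    rw [div_lt_div_iff₀ hqpos htpos] at hm₁
    linarith
  -- fact 1: t * (Λ * ℓ) < n
  have hfact1 : (t:ℝ) * (Λ * ℓ) < n := by
    have h1 : β ≤ β / q := by
      rw [le_div_iff₀ hqpos]
      exact mul_le_of_le_one_right hβpos.le hqle1
    have h2 : β < 1 / t := lt_of_le_of_lt h1 hm₁
    rw [hβdef, div_lt_div_iff₀ hNpos htpos] at h2
    linarith only [h2]
  set K : ℝ := (m₁:ℝ) + (m₂:ℝ) with hKdef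
  have hKta : K ≤ (t:ℝ) * A := by
    have h1 : (t:ℝ) * ((m₁:ℝ) + (m₂:ℝ)/t) = t * m₁ + m₂ := by
      field_simp
    have h2 : (t:ℝ) * ((m₁:ℝ) + (m₂:ℝ)/t) ≤ (t:ℝ) * A :=
      mul_le_mul_of_nonneg_left hhigh htpos.le
    have h3 : (m₁:ℝ) * 1 ≤ (m₁:ℝ) * t :=
      mul_le_mul_of_nonneg_left ht1 (Nat.cast_nonneg m₁)
    rw [h1] at h2
    rw [hKdef]
    rw [mul_one] at h3
    have h4 : (m₁:ℝ) * t = t * m₁ := mul_comm _ _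
    linarith only [h2, h3, h4]
  have hKN : K ≤ (n:ℝ) := le_trans hKta htn
  set k : ℕ := m₁ + m₂ with hkdef
  have hkK : (k:ℝ) = K := by rw [hkdef]; push_cast; rfl
  have hkn : k ≤ n := by
    have : (k:ℝ) ≤ (n:ℝ) := by rw [hkK]; exact hKN
    exact_mod_cast this
  have hsub : n - m₁ - m₂ = n - k := by omega
  have hcast : ((n - k : ℕ) : ℝ) = (n:ℝ) - K := by
    rw [Nat.cast_sub hkn, hkK]
  -- fraction bound
  have hfact_nat : (n.factorial : ℕ) ≤ (n - k).factorial * n ^ k := by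
    calc n.factorial = (n - k).factorial * n.descFactorial k :=
          (Nat.factorial_mul_descFactorial hkn).symm
      _ ≤ (n - k).factorial * n ^ k :=
          Nat.mul_le_mul_left _ (Nat.descFactorial_le_pow n k)
  have hfrac : (n.factorial : ℝ) / ((n - k).factorial * m₁.factorial * m₂.factorial)
      ≤ (n:ℝ) ^ k := by
    have hd1 : (0:ℝ) < ((n - k).factorial : ℝ) := by exact_mod_cast Nat.factorial_pos _
    have hd2 : ((n - k).factorial : ℝ) ≤ ((n - k).factorial : ℝ) * m₁.factorial * m₂.factorial := by
      have h1 : (1:ℝ) ≤ (m₁.factorial : ℝ) := by exact Nat.one_le_cast.mpr m₁.factorial_pos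
      have h2 : (1:ℝ) ≤ (m₂.factorial : ℝ) := by exact Nat.one_le_cast.mpr m₂.factorial_pos
      nth_rewrite 1 [show ((n - k).factorial : ℝ) = ((n - k).factorial : ℝ) * 1 * 1 by ring]
      gcongr
    calc (n.factorial : ℝ) / ((n - k).factorial * m₁.factorial * m₂.factorial)
        ≤ (n.factorial : ℝ) / ((n - k).factorial) := by
          apply div_le_div_of_nonneg_left (by positivity) hd1 hd2
      _ ≤ (n:ℝ) ^ k := by
          rw [div_le_iff₀ hd1]
          calc (n.factorial : ℝ) ≤ ((n - k).factorial * n ^ k : ℕ) := by exact_mod_cast hfact_nat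
            _ = ((n - k).factorial : ℝ) * (n:ℝ) ^ k := by push_cast; ring
            _ = (n:ℝ) ^ k * ((n - k).factorial : ℝ) := by ring
  -- power bound
  have h1q : (0:ℝ) ≤ 1 - q := by linarith
  have hP : (1 - q) ^ (n - k) ≤ Real.exp (-(q * ((n:ℝ) - K))) := by
    calc (1 - q) ^ (n - k) ≤ (Real.exp (-q)) ^ (n - k) := by
          apply pow_le_pow_left₀ h1q
          linarith [Real.add_one_le_exp (-q)]
      _ = Real.exp ((n - k : ℕ) * (-q)) := (Real.exp_nat_mul _ _).symm
      _ = Real.exp (-(q * ((n:ℝ) - K))) := by rw [hcast]; ring_nf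
  -- main exponent inequality
  have hNK : 0 ≤ (n:ℝ) - K := by linarith
  have hβN : β * (n:ℝ) = Λ * ℓ := by rw [hβdef]; field_simp
  have ht2 : (t:ℝ) * A * ℓ < (n:ℝ) := by
    have h1 : (t:ℝ) * A * ℓ < (t:ℝ) * Λ * ℓ :=
      mul_lt_mul_of_pos_right (mul_lt_mul_of_pos_left hAΛ htpos) hℓ
    have h2 : (t:ℝ) * Λ * ℓ = t * (Λ * ℓ) := by ring
    linarith only [h1, h2, hfact1]
  have hmain : K * ℓ - q * ((n:ℝ) - K) < (t:ℝ) * (2 * Λ - (Λ - A) * ℓ) :=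
    key_ineq (t:ℝ) A Λ ℓ (n:ℝ) K q htpos hℓ hΛpos hNpos hKta hAΛ
      (by rw [← hβdef]; exact hfact2) ht2 hNK
  -- target rewrite
  have htarget : (t:ℝ) * (2 * Lp p n - Lp p (Lp p n * Real.log n) * Real.log n)
      = (t:ℝ) * (2 * Λ - (Λ - A) * ℓ) := by
    have : Lp p (Λ * ℓ) = Λ - A := by
      rw [Lp, ← hbdef]; linarith [hAeq]
    rw [← hldef, ← hΛdef, this]
  rw [htarget]
  calc (n.factorial : ℝ) / ((n - m₁ - m₂).factorial * m₁.factorial * m₂.factorial) *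
        (1 - (1 - p) ^ m₁) ^ (n - m₁ - m₂)
      ≤ (n:ℝ) ^ k * Real.exp (-(q * ((n:ℝ) - K))) := by
        rw [show n - m₁ - m₂ = n - k from hsub]
        exact mul_le_mul hfrac hP (pow_nonneg h1q _) (by positivity)
    _ = Real.exp (K * ℓ - q * ((n:ℝ) - K)) := by
        rw [← Real.exp_log (x := (n:ℝ) ^ k) (by positivity), ← Real.exp_add,
          Real.log_pow, hkK, ← hldef]
        ring_nf
    _ < Real.exp ((t:ℝ) * (2 * Λ - (Λ - A) * ℓ)) := Real.exp_lt_exp.mpr hmain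
end

section
/- Let p ∈ (0,1) and let t ≥ 2 be an integer. Let (a_n)_{n ≥ 2} be a sequence of real numbers such that for every sufficiently large n, a_n is of the form m₁ + m₂/t for some nonnegative integers m₁, m₂ and a_p(n) − 1 < a_n ≤ a_p(n). Then the quantity E_n := Σ n!/((n−m₁−m₂)!·m₁!·m₂!) · (1 − (1−p)^{m₁})^{n−m₁−m₂}, where the sum ranges over all pairs (m₁, m₂) of nonnegative integers with m₁ + m₂/t = a_n and m₁ + m₂ ≤ n, tends to 0 as n → ∞. -/
open Filter

set_option maxHeartbeats 1000000

open scoped Classical in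
theorem stmt_13 (p : ℝ) (hp : p ∈ Set.Ioo (0 : ℝ) 1) (t : ℕ) (ht : 2 ≤ t)
    (a : ℕ → ℝ)
    (ha : ∀ᶠ n : ℕ in atTop,
      (∃ m₁ m₂ : ℕ, a n = (m₁ : ℝ) + (m₂ : ℝ) / t) ∧
      apn p n - 1 < a n ∧ a n ≤ apn p n) :
    Filter.Tendsto (fun n : ℕ =>
      ∑ q ∈ (Finset.range (n + 1) ×ˢ Finset.range (n + 1)).filter
          (fun q => (q.1 : ℝ) + (q.2 : ℝ) / t = a n ∧ q.1 + q.2 ≤ n),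
        (n.factorial : ℝ) /
            ((n - q.1 - q.2).factorial * q.1.factorial * q.2.factorial) *
          (1 - (1 - p) ^ q.1) ^ (n - q.1 - q.2))
      Filter.atTop (nhds 0) := by
  obtain ⟨hp0, hp1⟩ := hp
  have hq0 : (0:ℝ) < 1 - p := by linarith
  have hq1 : 1 - p < 1 := by linarith
  have hb1 : (1:ℝ) < 1 / (1 - p) := by
    rw [lt_div_iff₀ hq0]; linarith
  obtain ⟨c, hcdef⟩ : ∃ c : ℝ, c = Real.log (1 / (1 - p)) := ⟨_, rfl⟩
  have hc0 : 0 < c := hcdef ▸ Real.log_pos hb1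
  have hclog : Real.log (1 - p) = -c := by
    rw [hcdef, one_div, Real.log_inv, neg_neg]
  have ht2 : (2:ℝ) ≤ (t:ℝ) := by exact_mod_cast ht
  have ht0 : (0:ℝ) < (t:ℝ) := by linarith
  apply squeeze_zero' ?_ ?_ (tendsto_const_div_atTop_nhds_zero_nat 4)
  · -- nonnegativity
    filter_upwards with n
    apply Finset.sum_nonneg
    intro q hq
    have h1 : (1-p) ^ q.1 ≤ 1 := pow_le_one₀ hq0.le hq1.le
    have h2 : (0:ℝ) ≤ 1 - (1-p) ^ q.1 := by linarith
    have h3 : (0:ℝ) < ((n - q.1 - q.2).factorial : ℝ) * q.1.factorial * q.2.factorial := by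
      positivity
    exact mul_nonneg (div_nonneg (Nat.cast_nonneg _) h3.le) (pow_nonneg h2 _)
  · -- main bound
    have hLog : Tendsto (fun n : ℕ => Real.log n) atTop atTop :=
      Real.tendsto_log_atTop.comp tendsto_natCast_atTop_atTop
    have hSq : Tendsto (fun n : ℕ => Real.log n ^ 2 / (1 * (n:ℝ) + 0)) atTop (nhds 0) :=
      (Real.tendsto_pow_log_div_mul_add_atTop 1 0 2 one_ne_zero).comp
        tendsto_natCast_atTop_atTop
    have hGt : Tendsto
        (fun n : ℕ => Real.logb (1/(1-p)) (Real.log n / c * Real.log n)) atTop atTop :=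
      (Real.tendsto_logb_atTop hb1).comp ((hLog.atTop_div_const hc0).atTop_mul_atTop₀ hLog)
    have heps : (0:ℝ) < c^2 / (2 * ((t:ℝ)+1)) := by positivity
    filter_upwards [ha, hLog.eventually_ge_atTop (2*(t:ℝ)), hLog.eventually_ge_atTop c,
      hSq.eventually_lt_const heps, hGt.eventually_ge_atTop 7,
      eventually_ge_atTop 3] with n hA hS2t hSc hsq hG7 hn3
    obtain ⟨-, hlow, hupp⟩ := hA
    have hn3' : (3:ℝ) ≤ (n:ℝ) := by exact_mod_cast hn3
    have hn0 : (0:ℝ) < (n:ℝ) := by linarith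
    obtain ⟨S, hSdef⟩ : ∃ S : ℝ, S = Real.log n := ⟨_, rfl⟩
    rw [← hSdef] at hS2t hSc hsq hG7
    have hS0 : (0:ℝ) < S := by linarith
    obtain ⟨L, hLdef⟩ : ∃ L : ℝ, L = S / c := ⟨_, rfl⟩
    rw [← hLdef] at hG7
    have hL1 : 1 ≤ L := by
      rw [hLdef, le_div_iff₀ hc0]; linarith
    have hL0 : (0:ℝ) < L := by linarith
    have hLS0 : (0:ℝ) < L * S := by positivity
    have hLc : L * c = S := by
      rw [hLdef]; field_simp
    -- (t+1) * L^2 ≤ n / 2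
    have hsqn : ((t:ℝ)+1) * L^2 ≤ (n:ℝ) / 2 := by
      rw [one_mul, add_zero, div_lt_div_iff₀ hn0 (by positivity)] at hsq
      rw [hLdef, div_pow, ← mul_div_assoc,
        div_le_div_iff₀ (by positivity) (by norm_num : (0:ℝ) < 2)]
      linarith [hsq]
    -- apn rewritten
    have hlogbn : Real.logb (1/(1-p)) (n:ℝ) = L := by
      rw [Real.logb, ← hcdef, ← hSdef, ← hLdef]
    have hapn : apn p n = L - Real.logb (1/(1-p)) (L * S) := by
      rw [apn, hlogbn]
      rw [show Real.log (n:ℝ) = S from hSdef.symm]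
      rw [Real.logb_div (ne_of_gt hn0) (ne_of_gt hLS0), hlogbn]
    have hG7' : (7:ℝ) ≤ Real.logb (1/(1-p)) (L * S) := hG7
    have haU : a n ≤ L - 7 := by rw [hapn] at hupp; linarith
    -- c * apn = log (n / (L*S))
    have hcapn : c * apn p n = Real.log ((n:ℝ) / (L * S)) := by
      rw [apn, hlogbn]
      rw [show Real.log (n:ℝ) = S from hSdef.symm]
      rw [Real.logb, ← hcdef]
      field_simp
    have hexpA : Real.exp (-(c * apn p n)) = L * S / (n:ℝ) := by
      rw [hcapn, Real.exp_neg, Real.exp_log (div_pos hn0 hLS0), inv_div]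
    -- per-term bound
    have key : ∀ u v : ℕ, (u:ℝ) + (v:ℝ)/t = a n → u + v ≤ n →
        (n.factorial : ℝ) / ((n - u - v).factorial * u.factorial * v.factorial) *
          (1 - (1 - p) ^ u) ^ (n - u - v) ≤ (((n:ℝ))^5)⁻¹ := by
      intro u v hAe huv
      have hu0 : (0:ℝ) ≤ (u:ℝ) := Nat.cast_nonneg u
      have hv0 : (0:ℝ) ≤ (v:ℝ) := Nat.cast_nonneg v
      have ha0 : 0 ≤ a n := by rw [← hAe]; positivity
      have hu_le : (u:ℝ) ≤ a n := by
        rw [← hAe]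
        have : (0:ℝ) ≤ (v:ℝ)/t := by positivity
        linarith
      have hv_le : (v:ℝ) ≤ (t:ℝ) * a n := by
        have h1 : (v:ℝ)/t = a n - u := by linarith [hAe]
        have h2 : (v:ℝ) = (t:ℝ) * (a n - u) := by
          rw [← h1]; field_simp
        have h3 : (t:ℝ) * (a n - u) = (t:ℝ) * a n - (t:ℝ) * u := by ring
        linarith [mul_nonneg ht0.le hu0, h2, h3]
      have haL : a n ≤ L := by linarith
      have hM : (u:ℝ) + (v:ℝ) ≤ ((t:ℝ)+1) * L := by
        have h := mul_le_mul_of_nonneg_left haL (show (0:ℝ) ≤ (t:ℝ)+1 by linarith)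
        linarith [hu_le, hv_le]
      have hML : (u:ℝ) + (v:ℝ) ≤ (n:ℝ)/2 := by
        have h2 : ((t:ℝ)+1)*L*1 ≤ ((t:ℝ)+1)*L*L :=
          mul_le_mul_of_nonneg_left hL1 (by positivity)
        linarith [h2, hsqn, hM]
      -- cast of n - u - v
      have hN : ((n - u - v : ℕ) : ℝ) = (n:ℝ) - ((u:ℝ) + (v:ℝ)) := by
        rw [Nat.sub_sub, Nat.cast_sub huv]
        push_cast; ring
      have hN0 : (0:ℝ) ≤ ((n - u - v : ℕ) : ℝ) := Nat.cast_nonneg _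
      -- factorial bound
      have hfact : (n.factorial : ℝ) / ((n - u - v).factorial * u.factorial * v.factorial)
          ≤ ((n:ℝ)) ^ (u + v) := by
        have h1 : (n - (u+v)).factorial * n.descFactorial (u+v) = n.factorial :=
          Nat.factorial_mul_descFactorial huv
        have h2 : n.descFactorial (u+v) ≤ n ^ (u+v) := Nat.descFactorial_le_pow n (u+v)
        have h3 : (n.factorial:ℝ) ≤ ((n - u - v).factorial : ℝ) * (n:ℝ)^(u+v) := by
          rw [Nat.sub_sub]
          calc (n.factorial:ℝ) = ((n - (u+v)).factorial : ℝ) * (n.descFactorial (u+v) : ℝ) := by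
                exact_mod_cast h1.symm
            _ ≤ ((n - (u+v)).factorial : ℝ) * (n:ℝ)^(u+v) := by
                apply mul_le_mul_of_nonneg_left _ (Nat.cast_nonneg _)
                exact_mod_cast h2
        rw [div_le_iff₀ (by positivity)]
        have h4 : (1:ℝ) ≤ (u.factorial : ℝ) * (v.factorial : ℝ) := by
          have h5' : 1 ≤ u.factorial := Nat.one_le_iff_ne_zero.mpr (Nat.factorial_ne_zero u)
          have h6' : 1 ≤ v.factorial := Nat.one_le_iff_ne_zero.mpr (Nat.factorial_ne_zero v)
          have h5 : (1:ℝ) ≤ (u.factorial:ℝ) := by exact_mod_cast h5'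
          have h6 : (1:ℝ) ≤ (v.factorial:ℝ) := by exact_mod_cast h6'
          calc (1:ℝ) = 1 * 1 := by norm_num
            _ ≤ (u.factorial:ℝ) * (v.factorial:ℝ) :=
                mul_le_mul h5 h6 zero_le_one (by linarith)
        calc (n.factorial:ℝ) ≤ ((n - u - v).factorial : ℝ) * (n:ℝ)^(u+v) := h3
          _ ≤ ((n - u - v).factorial : ℝ) * (u.factorial:ℝ) * (v.factorial:ℝ) * (n:ℝ)^(u+v) := by
              have hff : (0:ℝ) < ((n - u - v).factorial : ℝ) := by
                exact_mod_cast Nat.factorial_pos _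
              calc ((n - u - v).factorial : ℝ) * (n:ℝ)^(u+v)
                  = ((n - u - v).factorial : ℝ) * (n:ℝ)^(u+v) * 1 := (mul_one _).symm
                _ ≤ ((n - u - v).factorial : ℝ) * (n:ℝ)^(u+v)
                      * ((u.factorial:ℝ) * (v.factorial:ℝ)) := by
                    apply mul_le_mul_of_nonneg_left h4 (by positivity)
                _ = ((n - u - v).factorial : ℝ) * (u.factorial:ℝ) * (v.factorial:ℝ)
                      * (n:ℝ)^(u+v) := by ring
          _ = (n:ℝ) ^ (u + v) * (((n - u - v).factorial:ℝ) * u.factorial * v.factorial) := by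
              ring
      -- power bound
      have hqu1 : (1-p)^u ≤ 1 := pow_le_one₀ hq0.le hq1.le
      have hqu0 : (0:ℝ) < (1-p)^u := pow_pos hq0 u
      have hpow : (1 - (1-p)^u) ^ (n - u - v)
          ≤ Real.exp (-((1-p)^u * ((n - u - v : ℕ):ℝ))) := by
        have h1 : 1 - (1-p)^u ≤ Real.exp (-(1-p)^u) := by
          have := Real.add_one_le_exp (-(1-p)^u); linarith
        calc (1 - (1-p)^u)^(n-u-v) ≤ (Real.exp (-(1-p)^u))^(n-u-v) :=
              pow_le_pow_left₀ (by linarith) h1 _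
          _ = Real.exp (-((1-p)^u * ((n - u - v : ℕ):ℝ))) := by
              rw [← Real.exp_nat_mul]; congr 1; ring
      -- (1-p)^u as exp
      have hq_eq : (1-p)^u = Real.exp (-(c * u)) := by
        rw [← Real.exp_log hq0, ← Real.exp_nat_mul, hclog]
        congr 1; ring
      -- lower bound on (1-p)^u
      have hkey : L * S / n * (1 + c * v / t) ≤ (1-p)^u := by
        rw [hq_eq]
        have h1 : -(c * (u:ℝ)) = -(c * a n) + c * v / t := by
          rw [← hAe]; ring
        rw [h1, Real.exp_add]
        have h2 : L * S / n ≤ Real.exp (-(c * a n)) := by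
          rw [← hexpA]
          apply Real.exp_le_exp.mpr
          linarith [mul_le_mul_of_nonneg_left hupp hc0.le]
        have h3 : 1 + c * v / t ≤ Real.exp (c * v / t) := by
          have := Real.add_one_le_exp (c * v / t); linarith
        apply mul_le_mul h2 h3 (by positivity) (Real.exp_pos _).le
      -- core arithmetic inequality
      have e1 : L * ((u:ℝ) + (v:ℝ)) ≤ (n:ℝ) := by
        have h := mul_le_mul_of_nonneg_left hM hL0.le
        have h2 : ((t:ℝ)+1)*L*1 ≤ ((t:ℝ)+1)*L*L :=
          mul_le_mul_of_nonneg_left hL1 (by positivity)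
        linarith [h, hsqn, hn0]
      have r1 : L * S - S ≤ L * S / (n:ℝ) * ((n:ℝ) - ((u:ℝ)+(v:ℝ))) := by
        rw [div_mul_eq_mul_div, le_div_iff₀ hn0]
        linarith [mul_le_mul_of_nonneg_left e1 hS0.le]
      have r2 : S * (v:ℝ) ≤ L * S / (n:ℝ) * (c * (v:ℝ) / t) * ((n:ℝ) - ((u:ℝ)+(v:ℝ))) := by
        have hnM : (n:ℝ)/2 ≤ (n:ℝ) - ((u:ℝ)+(v:ℝ)) := by linarith
        have hexpand : L * S / (n:ℝ) * (c * (v:ℝ) / t) * ((n:ℝ) - ((u:ℝ)+(v:ℝ)))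
            = L * S * (c * (v:ℝ)) * ((n:ℝ) - ((u:ℝ)+(v:ℝ))) / ((n:ℝ) * t) := by
          rw [div_mul_div_comm, div_mul_eq_mul_div]
        rw [hexpand, le_div_iff₀ (by positivity)]
        have p1 : (2*(t:ℝ)) * ((n:ℝ)/2) ≤ S * ((n:ℝ) - ((u:ℝ)+(v:ℝ))) :=
          mul_le_mul hS2t hnM (by positivity) hS0.le
        have hLc2 : L * S * (c * (v:ℝ)) * ((n:ℝ) - ((u:ℝ)+(v:ℝ)))
            = (L * c) * (S * (v:ℝ) * ((n:ℝ) - ((u:ℝ)+(v:ℝ)))) := by ring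
        rw [hLc2, hLc]
        linarith [mul_le_mul_of_nonneg_left p1 (mul_nonneg hS0.le hv0)]
      have lhs_le : ((u:ℝ)+(v:ℝ)) * S + 5 * S ≤ (L * S - S) + S * (v:ℝ) := by
        have h1 := mul_le_mul_of_nonneg_right hu_le hS0.le
        have h2 := mul_le_mul_of_nonneg_right haU hS0.le
        linarith [h1, h2, hS0.le]
      have final : ((u:ℝ)+(v:ℝ)) * S + 5 * S
          ≤ L * S / (n:ℝ) * (1 + c * (v:ℝ) / t) * ((n:ℝ) - ((u:ℝ)+(v:ℝ))) := by
        have hexpand : L * S / (n:ℝ) * (1 + c * (v:ℝ) / t) * ((n:ℝ) - ((u:ℝ)+(v:ℝ)))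
            = L * S / (n:ℝ) * ((n:ℝ) - ((u:ℝ)+(v:ℝ)))
              + L * S / (n:ℝ) * (c * (v:ℝ) / t) * ((n:ℝ) - ((u:ℝ)+(v:ℝ))) := by ring
        rw [hexpand]
        linarith
      have core : ((u:ℝ)+(v:ℝ)) * S - (1-p)^u * ((n - u - v : ℕ):ℝ) ≤ -(5 * S) := by
        have h1 : L * S / n * (1 + c * v / t) * ((n - u - v : ℕ):ℝ)
            ≤ (1-p)^u * ((n - u - v : ℕ):ℝ) :=
          mul_le_mul_of_nonneg_right hkey hN0
        rw [hN] at h1 ⊢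
        linarith
      -- assemble
      have hnpow : ((n:ℝ)) ^ (u + v) = Real.exp (((u:ℝ)+(v:ℝ)) * S) := by
        rw [hSdef, show ((u:ℝ)+(v:ℝ)) = ((u+v : ℕ):ℝ) by push_cast; ring,
          Real.exp_nat_mul, Real.exp_log hn0]
      have h5 : (((n:ℝ))^5)⁻¹ = Real.exp (-(5 * S)) := by
        rw [hSdef, Real.exp_neg]
        congr 1
        rw [show (5:ℝ) * Real.log n = ((5:ℕ):ℝ) * Real.log n by norm_num,
          Real.exp_nat_mul, Real.exp_log hn0]
      calc (n.factorial : ℝ) / ((n - u - v).factorial * u.factorial * v.factorial) *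
            (1 - (1 - p) ^ u) ^ (n - u - v)
          ≤ ((n:ℝ)) ^ (u + v) * Real.exp (-((1-p)^u * ((n - u - v : ℕ):ℝ))) := by
            apply mul_le_mul hfact hpow (pow_nonneg (by linarith) _) (by positivity)
        _ = Real.exp (((u:ℝ)+(v:ℝ)) * S - (1-p)^u * ((n - u - v : ℕ):ℝ)) := by
            rw [hnpow, ← Real.exp_add]; exact congrArg Real.exp (by ring)
        _ ≤ Real.exp (-(5 * S)) := Real.exp_le_exp.mpr core
        _ = (((n:ℝ))^5)⁻¹ := h5.symm
    -- sum bound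
    set F := (Finset.range (n + 1) ×ˢ Finset.range (n + 1)).filter
        (fun q : ℕ × ℕ => (q.1 : ℝ) + (q.2 : ℝ) / t = a n ∧ q.1 + q.2 ≤ n) with hF
    have hcard : (F.card : ℝ) ≤ ((n:ℝ)+1) * ((n:ℝ)+1) := by
      have h1 : F.card ≤ (n+1) * (n+1) := by
        calc F.card ≤ ((Finset.range (n + 1) ×ˢ Finset.range (n + 1))).card :=
              Finset.card_filter_le _ _
          _ = (n+1) * (n+1) := by
              rw [Finset.card_product, Finset.card_range]
      calc (F.card : ℝ) ≤ (((n+1) * (n+1) : ℕ) : ℝ) := by exact_mod_cast h1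
        _ = ((n:ℝ)+1) * ((n:ℝ)+1) := by push_cast; ring
    calc (∑ q ∈ F, (n.factorial : ℝ) /
            ((n - q.1 - q.2).factorial * q.1.factorial * q.2.factorial) *
          (1 - (1 - p) ^ q.1) ^ (n - q.1 - q.2))
        ≤ F.card • (((n:ℝ))^5)⁻¹ := by
          apply Finset.sum_le_card_nsmul
          intro q hq
          rw [hF, Finset.mem_filter] at hq
          exact key q.1 q.2 hq.2.1 hq.2.2
      _ = (F.card : ℝ) * (((n:ℝ))^5)⁻¹ := by rw [nsmul_eq_mul]
      _ ≤ 4 / (n:ℝ) := by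
          rw [← div_eq_mul_inv, div_le_div_iff₀ (by positivity) hn0]
          have h1 : (F.card:ℝ) * (n:ℝ) ≤ (((n:ℝ)+1)*((n:ℝ)+1)) * (n:ℝ) :=
            mul_le_mul_of_nonneg_right hcard hn0.le
          have hx : ((n:ℝ)+1) ≤ 2*(n:ℝ) := by linarith
          have h2 : ((n:ℝ)+1)*((n:ℝ)+1) ≤ (2*(n:ℝ))*(2*(n:ℝ)) :=
            mul_le_mul hx hx (by linarith) (by linarith)
          have h2n := mul_le_mul_of_nonneg_right h2 hn0.le
          have h3 : (n:ℝ)^3 ≤ (n:ℝ)^5 := pow_le_pow_right₀ (by linarith) (by norm_num)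
          linarith [h1, h2n, h3]
end

section
/- Let p ∈ (0,1) and let t be a positive integer. Then with probability tending to 1 as n → ∞, the (1/t)-self domination number of the Erdős–Rényi random graph G(n,p) satisfies γ^{1/t}(G(n,p)) > a_p(n). -/
open Filter

open scoped Classical in
/-- The probability of the event `E` under the Erdős–Rényi measure `μ_{n,p}`. -/
noncomputable def erProb (n : ℕ) (p : ℝ) (E : Set (SimpleGraph (Fin n))) : ℝ :=
  ∑ G : SimpleGraph (Fin n),
    if G ∈ E then p ^ (Nat.card G.edgeSet) * (1 - p) ^ (n.choose 2 - Nat.card G.edgeSet) else 0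

section ERPrSection

open Finset

namespace ERPr

set_option linter.unusedSectionVars false

variable {ι : Type*} [DecidableEq ι] [Fintype ι]

/-- weight of a Boolean value -/
noncomputable def wgt (p : ℝ) (b : Bool) : ℝ := if b then p else 1 - p

open scoped Classical in
/-- probability of an event under the product Bernoulli measure -/
noncomputable def pr (p : ℝ) (φ : (ι → Bool) → Prop) : ℝ :=
  ∑ f : ι → Bool, if φ f then ∏ i, wgt p (f i) else 0

lemma wgt_nonneg {p : ℝ} (h0 : 0 ≤ p) (h1 : p ≤ 1) (b : Bool) : 0 ≤ wgt p b := by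
  cases b <;> simp [wgt] <;> linarith

lemma prodw_nonneg {p : ℝ} (h0 : 0 ≤ p) (h1 : p ≤ 1) (f : ι → Bool) :
    0 ≤ ∏ i, wgt p (f i) :=
  Finset.prod_nonneg fun i _ => wgt_nonneg h0 h1 (f i)

lemma pr_congr {p : ℝ} {φ ψ : (ι → Bool) → Prop} (h : ∀ f, φ f ↔ ψ f) :
    pr p φ = pr p ψ := by
  unfold pr
  refine Finset.sum_congr rfl fun f _ => ?_
  by_cases hf : φ f
  · rw [if_pos hf, if_pos ((h f).1 hf)]
  · rw [if_neg hf, if_neg (fun hgf => hf ((h f).2 hgf))]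

lemma sum_prod_wgt (p : ℝ) : ∑ f : ι → Bool, ∏ i, wgt p (f i) = 1 := by
  classical
  have := Finset.prod_univ_sum (fun _ : ι => (Finset.univ : Finset Bool))
      (fun _ b => wgt p b)
  rw [Fintype.piFinset_univ] at this
  rw [← this]
  have h1 : ∀ i : ι, ∑ b : Bool, wgt p b = 1 := fun i => by simp [wgt]
  rw [Finset.prod_congr rfl fun i _ => h1 i, Finset.prod_const_one]

lemma pr_true (p : ℝ) : pr p (fun _ : ι → Bool => True) = 1 := by
  unfold pr; simp [sum_prod_wgt]

lemma pr_nonneg {p : ℝ} (h0 : 0 ≤ p) (h1 : p ≤ 1) (φ : (ι → Bool) → Prop) :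
    0 ≤ pr p φ := by
  unfold pr
  refine Finset.sum_nonneg fun f _ => ?_
  split
  · exact prodw_nonneg h0 h1 f
  · exact le_refl 0

lemma pr_add_compl (p : ℝ) (φ : (ι → Bool) → Prop) :
    pr p φ + pr p (fun f => ¬ φ f) = 1 := by
  classical
  unfold pr
  rw [← Finset.sum_add_distrib, ← sum_prod_wgt (ι := ι) p]
  refine Finset.sum_congr rfl fun f _ => ?_
  by_cases hf : φ f <;> simp [hf]

lemma pr_mono {p : ℝ} (h0 : 0 ≤ p) (h1 : p ≤ 1) {φ ψ : (ι → Bool) → Prop}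
    (h : ∀ f, φ f → ψ f) : pr p φ ≤ pr p ψ := by
  unfold pr
  refine Finset.sum_le_sum fun f _ => ?_
  by_cases hf : φ f
  · rw [if_pos hf, if_pos (h f hf)]
  · rw [if_neg hf]
    split
    · exact prodw_nonneg h0 h1 f
    · exact le_refl 0

lemma pr_le_one {p : ℝ} (h0 : 0 ≤ p) (h1 : p ≤ 1) (φ : (ι → Bool) → Prop) :
    pr p φ ≤ 1 := by
  rw [← pr_true (ι := ι) p]
  exact pr_mono h0 h1 (fun f _ => trivial)

lemma pr_biUnion_le {p : ℝ} (h0 : 0 ≤ p) (h1 : p ≤ 1) {κ : Type*} [DecidableEq κ]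
    (s : Finset κ) (φ : κ → (ι → Bool) → Prop) :
    pr p (fun f => ∃ j ∈ s, φ j f) ≤ ∑ j ∈ s, pr p (φ j) := by
  classical
  unfold pr
  rw [Finset.sum_comm]
  refine Finset.sum_le_sum fun f _ => ?_
  by_cases hf : ∃ j ∈ s, φ j f
  · obtain ⟨j, hj, hjf⟩ := hf
    rw [if_pos ⟨j, hj, hjf⟩]
    calc ∏ i, wgt p (f i)
        = (if φ j f then ∏ i, wgt p (f i) else 0) := by rw [if_pos hjf]
      _ ≤ ∑ j' ∈ s, (if φ j' f then ∏ i, wgt p (f i) else 0) := by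
          refine Finset.single_le_sum (f := fun j' => if φ j' f then ∏ i, wgt p (f i) else (0:ℝ)) (fun j' _ => ?_) hj
          split
          · exact prodw_nonneg h0 h1 f
          · exact le_refl 0
  · rw [if_neg hf]
    refine Finset.sum_nonneg fun j _ => ?_
    split
    · exact prodw_nonneg h0 h1 f
    · exact le_refl 0

/-- Dependence of an event only on coordinates satisfying `P`. -/
def DepOn (φ : (ι → Bool) → Prop) (P : ι → Prop) : Prop :=
  ∀ f g : ι → Bool, (∀ i, P i → f i = g i) → φ f → φ g


lemma prod_univ_irrel {α : Type*} {M : Type*} [CommMonoid M] (i1 i2 : Fintype α)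
    (f : α → M) :
    @Finset.prod α M _ (@Finset.univ α i1) f = @Finset.prod α M _ (@Finset.univ α i2) f := by
  cases Subsingleton.elim i1 i2; rfl

/-- instance-polymorphic product splitting over a predicate -/
lemma prod_split' {α : Type*} {M : Type*} [CommMonoid M] [Fintype α] (P : α → Prop)
    [DecidablePred P] [i1 : Fintype {x // P x}] [i2 : Fintype {x // ¬ P x}] (f : α → M) :
    (∏ i : {x // P x}, f i) * ∏ i : {x // ¬ P x}, f i = ∏ i, f i := by
  obtain rfl : i1 = Subtype.fintype P := Subsingleton.elim _ _
  obtain rfl : i2 = Subtype.fintype _ := Subsingleton.elim _ _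
  exact Fintype.prod_subtype_mul_prod_subtype P f

/-- evaluate a sum over Boolean functions of a product of per-coordinate weights -/
lemma sum_prod_eval {κ : Type*} [DecidableEq κ] [Fintype κ] (w : κ → Bool → ℝ) :
    ∑ g : κ → Bool, ∏ i, w i (g i) = ∏ i, (w i true + w i false) := by
  have h := Finset.prod_univ_sum (fun _ : κ => (Finset.univ : Finset Bool)) (fun i b => w i b)
  rw [Fintype.piFinset_univ] at h
  rw [← h]
  exact Finset.prod_congr rfl fun i _ => by rw [Fintype.sum_bool]

/-- key splitting: if `F f = G₁ (f|P) * G₂ (f|¬P)` then the sum factorizes. -/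
lemma sum_split (P : ι → Prop) [DecidablePred P] [Fintype {i // P i}]
    [Fintype {i // ¬ P i}] (F : (ι → Bool) → ℝ)
    (G₁ : ({i // P i} → Bool) → ℝ) (G₂ : ({i // ¬ P i} → Bool) → ℝ)
    (hF : ∀ f, F f = G₁ (fun i => f i) * G₂ (fun i => f i)) :
    ∑ f : ι → Bool, F f = (∑ g, G₁ g) * (∑ h, G₂ h) := by
  classical
  rw [← Equiv.sum_comp (Equiv.piEquivPiSubtypeProd P (fun _ => Bool)).symm F]
  rw [Fintype.sum_prod_type, Finset.sum_mul_sum]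
  refine Finset.sum_congr rfl fun g _ => Finset.sum_congr rfl fun h _ => ?_
  rw [hF]
  congr 1
  · congr 1
    funext i
    simp [Equiv.piEquivPiSubtypeProd_symm_apply, dif_pos i.2]
  · congr 1
    funext i
    simp [Equiv.piEquivPiSubtypeProd_symm_apply, dif_neg i.2]








open scoped Classical in
noncomputable def ind (φ : (ι → Bool) → Prop) (f : ι → Bool) : ℝ := if φ f then 1 else 0

open scoped Classical in
lemma pr_eq (p : ℝ) (φ : (ι → Bool) → Prop) :
    pr p φ = ∑ f : ι → Bool, ind φ f * ∏ i, wgt p (f i) := by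
  unfold pr ind
  refine Finset.sum_congr rfl fun f _ => ?_
  by_cases hf : φ f <;> simp [hf]

open scoped Classical in
lemma ind_congr {φ : (ι → Bool) → Prop} {f g : ι → Bool} (h : φ f ↔ φ g) :
    ind φ f = ind φ g := by
  unfold ind
  by_cases hf : φ f
  · rw [if_pos hf, if_pos (h.1 hf)]
  · rw [if_neg hf, if_neg (fun hg => hf (h.2 hg))]

open scoped Classical in
/-- independence: events depending on complementary coordinate sets multiply. -/
lemma pr_and_of_depOn (p : ℝ) {φ ψ : (ι → Bool) → Prop} (P : ι → Prop)
    (hφ : DepOn φ P) (hψ : DepOn ψ (fun i => ¬ P i)) :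
    pr p (fun f => φ f ∧ ψ f) = pr p φ * pr p ψ := by
  classical
  set e := (Equiv.piEquivPiSubtypeProd P (fun _ => Bool)).symm with he
  -- reconstructed function from the P-part
  set recP : ({i // P i} → Bool) → (ι → Bool) := fun g => e (g, fun _ => false) with hrecP
  set recN : ({i // ¬ P i} → Bool) → (ι → Bool) := fun h => e ((fun _ => false), h) with hrecN
  have hPval : ∀ (f : ι → Bool), ∀ i, P i → recP (fun j => f j) i = f i := by
    intro f i hi
    simp [hrecP, he, Equiv.piEquivPiSubtypeProd_symm_apply, dif_pos hi]
  have hNval : ∀ (f : ι → Bool), ∀ i, ¬ P i → recN (fun j => f j) i = f i := by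
    intro f i hi
    simp [hrecN, he, Equiv.piEquivPiSubtypeProd_symm_apply, dif_neg hi]
  have hφiff : ∀ f, φ f ↔ φ (recP (fun j => f j)) := by
    intro f
    constructor
    · exact hφ f _ (fun i hi => (hPval f i hi).symm)
    · exact hφ _ f (fun i hi => hPval f i hi)
  have hψiff : ∀ f, ψ f ↔ ψ (recN (fun j => f j)) := by
    intro f
    constructor
    · exact hψ f _ (fun i hi => (hNval f i hi).symm)
    · exact hψ _ f (fun i hi => hNval f i hi)
  have key := sum_split P
      (fun f => ind (fun f => φ f ∧ ψ f) f * ∏ i, wgt p (f i))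
      (fun g => ind (fun g' => φ (recP g')) g * ∏ i : {i // P i}, wgt p (g i))
      (fun h => ind (fun h' => ψ (recN h')) h * ∏ i : {i // ¬ P i}, wgt p (h i))
      (by
        intro f
        dsimp only
        have hprod := Fintype.prod_subtype_mul_prod_subtype P (fun i => wgt p (f i))
        have : ind (fun f => φ f ∧ ψ f) f
            = ind (fun g' => φ (recP g')) (fun i : {i // P i} => f i)
            * ind (fun h' => ψ (recN h')) (fun i : {i // ¬ P i} => f i) := by
          unfold ind
          by_cases h1 : φ f <;> by_cases h2 : ψ f
          · rw [if_pos ⟨h1, h2⟩, if_pos ((hφiff f).1 h1), if_pos ((hψiff f).1 h2)]; ring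
          · rw [if_neg (fun hc => h2 hc.2), if_neg (fun hc => h2 ((hψiff f).2 hc))]; ring
          · rw [if_neg (fun hc => h1 hc.1), if_neg (fun hc => h1 ((hφiff f).2 hc))]; ring
          · rw [if_neg (fun hc => h1 hc.1), if_neg (fun hc => h1 ((hφiff f).2 hc))]; ring
        rw [this, ← hprod]
        ring)
  have keyφ := sum_split P
      (fun f => ind φ f * ∏ i, wgt p (f i))
      (fun g => ind (fun g' => φ (recP g')) g * ∏ i : {i // P i}, wgt p (g i))
      (fun h => ∏ i : {i // ¬ P i}, wgt p (h i))
      (by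
        intro f
        dsimp only
        have hprod := Fintype.prod_subtype_mul_prod_subtype P (fun i => wgt p (f i))
        have : ind φ f = ind (fun g' => φ (recP g')) (fun i : {i // P i} => f i) :=
          ind_congr (hφiff f)
        rw [this, ← hprod]; ring)
  have keyψ := sum_split P
      (fun f => ind ψ f * ∏ i, wgt p (f i))
      (fun g => ∏ i : {i // P i}, wgt p (g i))
      (fun h => ind (fun h' => ψ (recN h')) h * ∏ i : {i // ¬ P i}, wgt p (h i))
      (by
        intro f
        dsimp only
        have hprod := Fintype.prod_subtype_mul_prod_subtype P (fun i => wgt p (f i))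
        have : ind ψ f = ind (fun h' => ψ (recN h')) (fun i : {i // ¬ P i} => f i) :=
          ind_congr (hψiff f)
        rw [this, ← hprod]; ring)
  rw [pr_eq, pr_eq, pr_eq, key, keyφ, keyψ, sum_prod_wgt, sum_prod_wgt]
  ring







open scoped Classical in
lemma pr_pin_false (p : ℝ) (T : Finset ι) :
    pr p (fun f => ∀ i ∈ T, f i = false) = (1 - p) ^ T.card := by
  have key := sum_split (fun i => i ∈ T)
      (fun f => ind (fun f => ∀ i ∈ T, f i = false) f * ∏ i, wgt p (f i))
      (fun g => ∏ i, ((if g i = false then (1:ℝ) else 0) * wgt p (g i)))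
      (fun h => ∏ i, wgt p (h i))
      (by
        intro f
        dsimp only
        rw [← prod_split' (fun i => i ∈ T) (fun i => wgt p (f i)), ← mul_assoc]
        congr 1
        by_cases hc : ∀ i ∈ T, f i = false
        · rw [show ind (fun f => ∀ i ∈ T, f i = false) f = 1 from if_pos hc, one_mul]
          exact (Finset.prod_congr rfl fun i _ => by
            rw [if_pos (hc i.1 i.2), one_mul]).symm
        · rw [show ind (fun f => ∀ i ∈ T, f i = false) f = 0 from if_neg hc, zero_mul]
          push_neg at hc
          obtain ⟨i, hi, hfi⟩ := hc
          refine (Finset.prod_eq_zero (Finset.mem_univ (⟨i, hi⟩ : {x // x ∈ T})) ?_).symm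
          rw [if_neg (by simpa using hfi), zero_mul])
  rw [pr_eq, key, sum_prod_wgt, mul_one]
  rw [sum_prod_eval (fun (i : {x // x ∈ T}) b => (if b = false then (1:ℝ) else 0) * wgt p b)]
  have h3 : ∀ i : {x // x ∈ T},
      ((if true = false then (1:ℝ) else 0) * wgt p true
        + (if false = false then (1:ℝ) else 0) * wgt p false) = 1 - p := by
    intro i; simp [wgt]
  rw [Finset.prod_congr rfl fun i _ => h3 i, Finset.prod_const]
  congr 1
  simp



lemma card_irrel {α : Type*} (i1 i2 : Fintype α) :
    @Fintype.card α i1 = @Fintype.card α i2 := by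
  cases Subsingleton.elim i1 i2; rfl

/-! ### Graphs and edge-slot functions -/

abbrev Slot (n : ℕ) : Type := {e : Sym2 (Fin n) // ¬ e.IsDiag}

def Fb {n : ℕ} (f : Slot n → Bool) (u v : Fin n) : Bool :=
  if h : ¬ (s(u, v) : Sym2 (Fin n)).IsDiag then f ⟨s(u, v), h⟩ else false

lemma Fb_symm {n : ℕ} (f : Slot n → Bool) (u v : Fin n) : Fb f u v = Fb f v u := by
  simp only [Fb, Sym2.eq_swap]

lemma Fb_of_ne {n : ℕ} (f : Slot n → Bool) {u v : Fin n} (h : u ≠ v) :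
    Fb f u v = f ⟨s(u, v), by simp [Sym2.mk_isDiag_iff, h]⟩ := by
  rw [Fb, dif_pos]

def graphOf {n : ℕ} (f : Slot n → Bool) : SimpleGraph (Fin n) where
  Adj u v := u ≠ v ∧ Fb f u v = true
  symm := ⟨fun u v ⟨h1, h2⟩ => ⟨h1.symm, by rw [← Fb_symm]; exact h2⟩⟩
  loopless := ⟨fun u h => h.1 rfl⟩

lemma graphOf_adj {n : ℕ} (f : Slot n → Bool) (u v : Fin n) :
    (graphOf f).Adj u v ↔ u ≠ v ∧ Fb f u v = true := Iff.rfl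

open scoped Classical in
noncomputable def toBool {n : ℕ} (G : SimpleGraph (Fin n)) (e : Slot n) : Bool :=
  decide (e.1 ∈ G.edgeSet)

noncomputable def graphEquiv (n : ℕ) : SimpleGraph (Fin n) ≃ (Slot n → Bool) where
  toFun := toBool
  invFun := graphOf
  left_inv G := by
    classical
    ext u v
    rw [graphOf_adj]
    constructor
    · rintro ⟨hne, hF⟩
      rw [Fb_of_ne _ hne] at hF
      simpa [toBool] using hF
    · intro h
      have hne := G.ne_of_adj h
      refine ⟨hne, ?_⟩
      rw [Fb_of_ne _ hne]
      simpa [toBool] using h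
  right_inv f := by
    classical
    funext e
    obtain ⟨e, he⟩ := e
    induction e using Sym2.ind with
    | _ u v =>
      have hne : u ≠ v := by simpa [Sym2.mk_isDiag_iff] using he
      show toBool (graphOf f) ⟨s(u, v), he⟩ = f ⟨s(u, v), he⟩
      have : (graphOf f).Adj u v ↔ f ⟨s(u, v), he⟩ = true := by
        rw [graphOf_adj, Fb_of_ne _ hne]
        simp [hne]
      cases hf : f ⟨s(u, v), he⟩
      · simp only [toBool, SimpleGraph.mem_edgeSet]
        rw [decide_eq_false]
        rw [this, hf]
        simp
      · simp only [toBool, SimpleGraph.mem_edgeSet]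
        rw [decide_eq_true]
        rw [this, hf]

lemma toBool_graphOf {n : ℕ} (f : Slot n → Bool) : toBool (graphOf f) = f :=
  (graphEquiv n).right_inv f

lemma card_slot (n : ℕ) : Fintype.card (Slot n) = n.choose 2 := by
  have h := Sym2.card_subtype_not_diag (α := Fin n)
  rw [Fintype.card_fin] at h
  exact (card_irrel _ _).trans h

open scoped Classical in
lemma ncard_edgeSet {n : ℕ} (G : SimpleGraph (Fin n)) :
    Nat.card G.edgeSet = (Finset.univ.filter fun e : Slot n => toBool G e = true).card := by
  classical
  have e1 : G.edgeSet ≃ {e : Slot n // toBool G e = true} :=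
    { toFun := fun x => ⟨⟨x.1, G.not_isDiag_of_mem_edgeSet x.2⟩, by
        simp [toBool, x.2]⟩
      invFun := fun y => ⟨y.1.1, by
        have := y.2
        simpa [toBool] using this⟩
      left_inv := fun x => rfl
      right_inv := fun y => rfl }
  rw [Nat.card_congr e1, Nat.card_eq_fintype_card]
  exact (card_irrel _ _).trans (Fintype.card_subtype _)

lemma prod_wgt_eq {n : ℕ} (p : ℝ) (f : Slot n → Bool) :
    ∏ e : Slot n, wgt p (f e)
      = p ^ (Finset.univ.filter fun e : Slot n => f e = true).card
        * (1 - p) ^ (n.choose 2 - (Finset.univ.filter fun e : Slot n => f e = true).card) := by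
  classical
  have h1 : ∀ e : Slot n, wgt p (f e) = if f e = true then p else 1 - p := by
    intro e; cases hfe : f e <;> simp [wgt]
  rw [Finset.prod_congr rfl fun e _ => h1 e]
  rw [Finset.prod_ite (fun _ => p) (fun _ => 1 - p), Finset.prod_const, Finset.prod_const]
  congr 2
  · rw [Finset.filter_not]
    rw [Finset.card_sdiff_of_subset (Finset.filter_subset _ _)]
    congr 1
    rw [Finset.card_univ]
    exact card_slot n
  
open scoped Classical in
lemma erProb_eq (n : ℕ) (p : ℝ) (E : Set (SimpleGraph (Fin n))) :
    erProb n p E = pr p (fun f : Slot n → Bool => graphOf f ∈ E) := by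
  classical
  unfold erProb pr
  rw [← Equiv.sum_comp (graphEquiv n).symm
    (fun G => if G ∈ E then p ^ (Nat.card G.edgeSet)
      * (1 - p) ^ (n.choose 2 - Nat.card G.edgeSet) else 0)]
  refine Finset.sum_congr rfl fun f _ => ?_
  have hsymm : (graphEquiv n).symm f = graphOf f := rfl
  rw [hsymm]
  have hn : Nat.card (graphOf f).edgeSet
      = (Finset.univ.filter fun e : Slot n => f e = true).card := by
    rw [ncard_edgeSet, toBool_graphOf]
  by_cases hE : graphOf f ∈ E
  · rw [if_pos hE, if_pos hE, hn, prod_wgt_eq]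
  · rw [if_neg hE, if_neg hE]

/-! ### Domination events -/

open scoped Classical in
lemma pr_und (p : ℝ) {n : ℕ} (A : Finset (Fin n)) (u : Fin n) (hu : u ∉ A) :
    pr p (fun f : Slot n → Bool => ∀ a ∈ A, Fb f u a = false) = (1 - p) ^ A.card := by
  classical
  set T : Finset (Slot n) :=
    Finset.univ.filter (fun e : Slot n => ∃ a ∈ A, e.1 = s(u, a)) with hT
  have hne : ∀ a ∈ A, u ≠ a := fun a ha h => hu (h ▸ ha)
  have hiff : ∀ f : Slot n → Bool,
      (∀ a ∈ A, Fb f u a = false) ↔ (∀ e ∈ T, f e = false) := by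
    intro f
    constructor
    · intro h e heT
      rw [hT, Finset.mem_filter] at heT
      obtain ⟨-, a, ha, he1⟩ := heT
      have : e = ⟨s(u, a), by rw [← he1]; exact e.2⟩ := Subtype.ext he1
      rw [this]
      rw [← Fb_of_ne f (hne a ha)]
      exact h a ha
    · intro h a ha
      rw [Fb_of_ne f (hne a ha)]
      refine h _ ?_
      rw [hT, Finset.mem_filter]
      exact ⟨Finset.mem_univ _, a, ha, rfl⟩
  rw [pr_congr hiff, pr_pin_false]
  congr 1
  refine (Finset.card_bij (fun a ha =>
      (⟨s(u, a), by simp [Sym2.mk_isDiag_iff]; exact hne a ha⟩ : Slot n)) ?_ ?_ ?_).symm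
  · intro a ha
    rw [hT, Finset.mem_filter]
    exact ⟨Finset.mem_univ _, a, ha, rfl⟩
  · intro a ha a' ha' h
    have h2 : (s(u, a) : Sym2 (Fin n)) = s(u, a') := congrArg Subtype.val h
    rw [Sym2.eq_iff] at h2
    rcases h2 with ⟨-, h2⟩ | ⟨h2, -⟩
    · exact h2
    · exact absurd h2 (hne a' ha')
  · intro e heT
    rw [hT, Finset.mem_filter] at heT
    obtain ⟨-, a, ha, he1⟩ := heT
    exact ⟨a, ha, Subtype.ext he1.symm⟩

open scoped Classical in
lemma pr_exists_dom (p : ℝ) {n : ℕ} (A : Finset (Fin n)) (u : Fin n) (hu : u ∉ A) :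
    pr p (fun f : Slot n → Bool => ∃ a ∈ A, Fb f u a = true)
      = 1 - (1 - p) ^ A.card := by
  have hc := pr_add_compl p (fun f : Slot n → Bool => ∃ a ∈ A, Fb f u a = true)
  have h2 : pr p (fun f : Slot n → Bool => ¬ ∃ a ∈ A, Fb f u a = true)
      = (1 - p) ^ A.card := by
    rw [pr_congr (ψ := fun f => ∀ a ∈ A, Fb f u a = false) (fun f => by
      push_neg
      constructor
      · intro h a ha
        exact Bool.eq_false_iff.2 (h a ha)
      · intro h a ha
        rw [h a ha]; simp)]
    exact pr_und p A u hu
  linarith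

open scoped Classical in
lemma pr_dom (p : ℝ) (hp0 : 0 ≤ p) (hp1 : p ≤ 1) {n : ℕ} (A W : Finset (Fin n))
    (hW : ∀ u ∈ W, u ∉ A) :
    pr p (fun f : Slot n → Bool => ∀ u ∈ W, ∃ a ∈ A, Fb f u a = true)
      ≤ (1 - (1 - p) ^ A.card) ^ W.card := by
  classical
  induction W using Finset.induction_on with
  | empty =>
    rw [pr_congr (ψ := fun _ => True) (by simp), pr_true]
    simp
  | @insert u W hu ih =>
    have huA : u ∉ A := hW u (Finset.mem_insert_self u W)
    have hWA : ∀ u' ∈ W, u' ∉ A := fun u' hu' => hW u' (Finset.mem_insert_of_mem hu')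
    set P : Slot n → Prop := fun e => ∃ a ∈ A, e.1 = s(u, a) with hP
    have hdep1 : DepOn (fun f : Slot n → Bool => ∃ a ∈ A, Fb f u a = true) P := by
      intro f g hag ⟨a, ha, hfa⟩
      have hua : u ≠ a := fun h => huA (h ▸ ha)
      refine ⟨a, ha, ?_⟩
      rw [Fb_of_ne g hua]
      rw [Fb_of_ne f hua] at hfa
      rw [← hag _ ⟨a, ha, rfl⟩]
      exact hfa
    have hdep2 : DepOn (fun f : Slot n → Bool => ∀ u' ∈ W, ∃ a ∈ A, Fb f u' a = true)
        (fun e => ¬ P e) := by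
      intro f g hag hf u' hu'
      obtain ⟨a, ha, hfa⟩ := hf u' hu'
      have hu'a : u' ≠ a := fun h => hWA u' hu' (h ▸ ha)
      have hu'u : u' ≠ u := fun h => hu (h ▸ hu')
      refine ⟨a, ha, ?_⟩
      rw [Fb_of_ne g hu'a]
      rw [Fb_of_ne f hu'a] at hfa
      rw [← hag _ ?_]
      · exact hfa
      · rw [hP]
        rintro ⟨a', ha', heq⟩
        rw [Sym2.eq_iff] at heq
        rcases heq with ⟨h1, -⟩ | ⟨h1, -⟩
        · exact hu'u h1
        · exact hWA u' hu' (h1 ▸ ha')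
    have hsplit : pr p (fun f : Slot n → Bool =>
        ∀ u' ∈ insert u W, ∃ a ∈ A, Fb f u' a = true)
        = pr p (fun f : Slot n → Bool => ∃ a ∈ A, Fb f u a = true)
          * pr p (fun f : Slot n → Bool => ∀ u' ∈ W, ∃ a ∈ A, Fb f u' a = true) := by
      rw [pr_congr (ψ := fun f => (∃ a ∈ A, Fb f u a = true)
        ∧ ∀ u' ∈ W, ∃ a ∈ A, Fb f u' a = true) (fun f => Finset.forall_mem_insert _ _ _)]
      exact pr_and_of_depOn p P hdep1 hdep2
    rw [hsplit, pr_exists_dom p A u huA, Finset.card_insert_of_notMem hu, pow_succ]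
    rw [mul_comm ((1 - (1 - p) ^ A.card) ^ W.card) _]
    have h1 : (0:ℝ) ≤ 1 - (1 - p) ^ A.card := by
      have : (1 - p) ^ A.card ≤ 1 := pow_le_one₀ (by linarith) (by linarith)
      linarith
    exact mul_le_mul_of_nonneg_left (ih hWA) h1

/-! ### Deterministic reduction -/

lemma selfDom_reduction {n : ℕ} (G : SimpleGraph (Fin n)) (c : ℝ) (hc0 : 0 < c)
    (hc1 : c ≤ 1) {a : ℝ} (h : G.selfDom c ≤ a) :
    ∃ A B : Finset (Fin n), Disjoint A B ∧ ((A.card : ℝ) + c * B.card ≤ a) ∧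
      ∀ u, u ∉ A → u ∉ B → ∃ v ∈ A, G.Adj u v := by
  classical
  set Wset : Set ℝ := {w : ℝ | ∃ f : Fin n → ℝ, G.IsSDF c f ∧ w = ∑ u, f u} with hWset
  have hne : Wset.Nonempty := by
    refine ⟨∑ u : Fin n, (1:ℝ), fun _ => 1, ⟨fun u => Or.inr (Or.inl rfl),
      fun u => Or.inl hc1⟩, rfl⟩
  have hfin : Wset.Finite := by
    have h1 : Wset ⊆ (fun f : Fin n → ℝ => ∑ u, f u) ''
        (Set.pi Set.univ (fun _ : Fin n => ({0, 1, c} : Set ℝ))) := by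
      rintro w ⟨f, hf, rfl⟩
      exact ⟨f, fun u _ => by rcases hf.1 u with h | h | h <;> simp [h], rfl⟩
    refine Set.Finite.subset (Set.Finite.image _ (Set.Finite.pi fun _ => ?_)) h1
    exact (Set.finite_singleton c).insert 1 |>.insert 0
  have hmem : sInf Wset ∈ Wset := hne.csInf_mem hfin
  obtain ⟨f, hf, heq⟩ := hmem
  have hsum : ∑ u, f u ≤ a := by
    rw [← heq]
    exact h
  set A : Finset (Fin n) := Finset.univ.filter (fun v => f v = 1) with hA
  set B : Finset (Fin n) := Finset.univ.filter (fun v => f v ≠ 1 ∧ f v = c) with hB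
  refine ⟨A, B, ?_, ?_, ?_⟩
  · rw [Finset.disjoint_left]
    intro v hvA hvB
    rw [hA, Finset.mem_filter] at hvA
    rw [hB, Finset.mem_filter] at hvB
    exact hvB.2.1 hvA.2
  · have hsplit1 := Finset.sum_filter_add_sum_filter_not Finset.univ
      (fun v => f v = 1) f
    have hsplit2 := Finset.sum_filter_add_sum_filter_not
      (Finset.univ.filter (fun v => ¬ f v = 1)) (fun v => f v = c) f
    have hAval : ∑ v ∈ A, f v = (A.card : ℝ) := by
      rw [Finset.sum_congr rfl (fun v hv => (Finset.mem_filter.1 hv).2), Finset.sum_const,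
        nsmul_eq_mul, mul_one]
    have hBval : ∑ v ∈ (Finset.univ.filter (fun v => ¬ f v = 1)).filter
        (fun v => f v = c), f v = c * B.card := by
      have hBeq : (Finset.univ.filter (fun v => ¬ f v = 1)).filter (fun v => f v = c)
          = B := by
        rw [Finset.filter_filter, hB]
      rw [hBeq]
      rw [Finset.sum_congr rfl (fun v hv => (Finset.mem_filter.1 hv).2.2), Finset.sum_const,
        nsmul_eq_mul, mul_comm]
    have hCval : ∑ v ∈ (Finset.univ.filter (fun v => ¬ f v = 1)).filter
        (fun v => ¬ f v = c), f v = 0 := by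
      refine Finset.sum_eq_zero fun v hv => ?_
      rw [Finset.mem_filter, Finset.mem_filter] at hv
      rcases hf.1 v with h0 | h1 | hc
      · exact h0
      · exact absurd h1 hv.1.2
      · exact absurd hc hv.2
    have : (A.card : ℝ) + c * B.card = ∑ u, f u := by
      rw [← hsplit1, ← hsplit2, hAval, hBval, hCval]
      ring
    linarith
  · intro u huA huB
    rw [hA, Finset.mem_filter] at huA
    rw [hB, Finset.mem_filter] at huB
    have hu1 : f u ≠ 1 := fun h1 => huA ⟨Finset.mem_univ _, h1⟩
    have huc : f u ≠ c := fun hcc => huB ⟨Finset.mem_univ _, hu1, hcc⟩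
    have hu0 : f u = 0 := by
      rcases hf.1 u with h0 | h1 | hcc
      · exact h0
      · exact absurd h1 hu1
      · exact absurd hcc huc
    rcases hf.2 u with hcle | ⟨v, hadj, hv1⟩
    · rw [hu0] at hcle
      linarith
    · have hv : f v = 1 := by
        rcases hf.1 v with h0 | h1 | hcc
        · rw [h0] at hv1; linarith
        · exact h1
        · rw [hcc] at hv1
          rw [hcc]
          linarith
      exact ⟨v, Finset.mem_filter.2 ⟨Finset.mem_univ _, hv⟩, hadj⟩

/-! ### Union bound -/

open scoped Classical in
lemma pr_bad_le {n : ℕ} (c : ℝ) (hc0 : 0 < c) (hc1 : c ≤ 1) (p : ℝ)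
    (hp0 : 0 ≤ p) (hp1 : p ≤ 1) (a : ℝ) :
    pr p (fun f : Slot n → Bool => (graphOf f).selfDom c ≤ a)
      ≤ ∑ AB ∈ (Finset.univ.filter (fun AB : Finset (Fin n) × Finset (Fin n) =>
          Disjoint AB.1 AB.2 ∧ (AB.1.card : ℝ) + c * AB.2.card ≤ a)),
        (1 - (1 - p) ^ AB.1.card) ^ (n - AB.1.card - AB.2.card) := by
  classical
  set PP : Finset (Finset (Fin n) × Finset (Fin n)) :=
    Finset.univ.filter (fun AB : Finset (Fin n) × Finset (Fin n) =>
      Disjoint AB.1 AB.2 ∧ (AB.1.card : ℝ) + c * AB.2.card ≤ a) with hPP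
  have step1 : pr p (fun f : Slot n → Bool => (graphOf f).selfDom c ≤ a)
      ≤ pr p (fun f : Slot n → Bool => ∃ AB ∈ PP,
          ∀ u ∈ Finset.univ \ (AB.1 ∪ AB.2), ∃ v ∈ AB.1, Fb f u v = true) := by
    refine pr_mono hp0 hp1 fun f hf => ?_
    obtain ⟨A, B, hdisj, hcard, hdom⟩ := selfDom_reduction (graphOf f) c hc0 hc1 hf
    refine ⟨(A, B), ?_, ?_⟩
    · rw [hPP, Finset.mem_filter]
      exact ⟨Finset.mem_univ _, hdisj, hcard⟩
    · intro u hu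
      rw [Finset.mem_sdiff, Finset.mem_union] at hu
      obtain ⟨v, hvA, hadj⟩ := hdom u (fun h => hu.2 (Or.inl h)) (fun h => hu.2 (Or.inr h))
      exact ⟨v, hvA, ((graphOf_adj f u v).1 hadj).2⟩
  have step2 := pr_biUnion_le (ι := Slot n) hp0 hp1 PP
    (fun AB f => ∀ u ∈ Finset.univ \ (AB.1 ∪ AB.2), ∃ v ∈ AB.1, Fb f u v = true)
  have step3 : ∀ AB ∈ PP,
      pr p (fun f : Slot n → Bool =>
        ∀ u ∈ Finset.univ \ (AB.1 ∪ AB.2), ∃ v ∈ AB.1, Fb f u v = true)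
      ≤ (1 - (1 - p) ^ AB.1.card) ^ (n - AB.1.card - AB.2.card) := by
    intro AB hAB
    rw [hPP, Finset.mem_filter] at hAB
    have hW : ∀ u ∈ Finset.univ \ (AB.1 ∪ AB.2), u ∉ AB.1 := by
      intro u hu
      rw [Finset.mem_sdiff, Finset.mem_union] at hu
      exact fun h => hu.2 (Or.inl h)
    have hcard : (Finset.univ \ (AB.1 ∪ AB.2)).card = n - AB.1.card - AB.2.card := by
      rw [Finset.card_sdiff_of_subset (Finset.subset_univ _), Finset.card_univ, Fintype.card_fin,
        Finset.card_union_of_disjoint hAB.2.1]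
      omega
    calc pr p (fun f : Slot n → Bool =>
        ∀ u ∈ Finset.univ \ (AB.1 ∪ AB.2), ∃ v ∈ AB.1, Fb f u v = true)
        ≤ (1 - (1 - p) ^ AB.1.card) ^ (Finset.univ \ (AB.1 ∪ AB.2)).card :=
          pr_dom p hp0 hp1 AB.1 _ hW
      _ = (1 - (1 - p) ^ AB.1.card) ^ (n - AB.1.card - AB.2.card) := by rw [hcard]
  exact step1.trans (step2.trans (Finset.sum_le_sum step3))

/-! ### The key analytic inequality -/

lemma key_ineq (p : ℝ) (hp0 : 0 < p) (hp1 : p < 1) (t : ℕ) (ht : 1 ≤ t) :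
    ∀ᶠ n : ℕ in atTop, ∀ s b : ℕ,
      ((s : ℝ) + (1 / (t : ℝ)) * b ≤ apn p n) → (s + b ≤ n) →
      ((s : ℝ) + b + 3) * Real.log n ≤ ((n - s - b : ℕ) : ℝ) * (1 - p) ^ s := by
  have h1p : (0:ℝ) < 1 - p := by linarith
  set bb : ℝ := 1 / (1 - p) with hbb
  have hbb1 : 1 < bb := by
    rw [hbb, lt_div_iff₀ h1p]; linarith
  have hbb0 : (0:ℝ) < bb := lt_trans one_pos hbb1
  set lam : ℝ := Real.log bb with hlam
  have hlam0 : (0:ℝ) < lam := Real.log_pos hbb1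
  set at' : ℝ := (t : ℝ) with hat'
  have hat0 : (0:ℝ) < at' := by
    rw [hat']; exact_mod_cast Nat.lt_of_lt_of_le Nat.zero_lt_one ht
  have hat1 : (1:ℝ) ≤ at' := by rw [hat']; exact_mod_cast ht
  -- eventual conditions
  have hlogN : Tendsto (fun n : ℕ => Real.log n) atTop atTop :=
    Real.tendsto_log_atTop.comp tendsto_natCast_atTop_atTop
  have hc1 : ∀ᶠ n : ℕ in atTop, (2:ℕ) ≤ n := eventually_ge_atTop 2
  have hc2 : ∀ᶠ n : ℕ in atTop, max 1 lam ≤ Real.log n :=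
    hlogN.eventually_ge_atTop _
  have hc3 : ∀ᶠ n : ℕ in atTop, at' ≤ Real.log n := hlogN.eventually_ge_atTop _
  have hc4 : ∀ᶠ n : ℕ in atTop,
      Real.exp (lam * 3 + (1 + at')) ≤ Real.log n * Real.log n / lam :=
    ((hlogN.atTop_mul_atTop₀ hlogN).atTop_div_const hlam0).eventually_ge_atTop _
  have hc5 : ∀ᶠ n : ℕ in atTop, ((1 + at') / lam) * Real.log n ≤ (n : ℝ) := by
    have hlo : (fun x : ℝ => ((1 + at') / lam) * Real.log x) =o[atTop] (fun x : ℝ => x) :=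
      Real.isLittleO_log_id_atTop.const_mul_left _
    have hR : ∀ᶠ x : ℝ in atTop, ((1 + at') / lam) * Real.log x ≤ x := by
      filter_upwards [Asymptotics.isLittleO_iff.mp hlo one_pos,
        eventually_ge_atTop (1:ℝ)] with x hx hx1
      have habs : |((1 + at') / lam) * Real.log x| ≤ 1 * |x| := by
        simpa [Real.norm_eq_abs, abs_mul, abs_div] using hx
      calc ((1 + at') / lam) * Real.log x ≤ |((1 + at') / lam) * Real.log x| :=
            le_abs_self _
        _ ≤ 1 * |x| := habs
        _ = x := by rw [one_mul, abs_of_nonneg (by linarith)]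
    exact tendsto_natCast_atTop_atTop.eventually hR
  filter_upwards [hc1, hc2, hc3, hc4, hc5] with n h1 h2 h3 h4 h5
  intro s b hs hsb
  set ℓ : ℝ := Real.log n with hℓ
  have hl0 : (0:ℝ) < ℓ := by
    rw [hℓ]
    refine Real.log_pos ?_
    exact_mod_cast Nat.lt_of_lt_of_le Nat.one_lt_two h1
  have hn0 : (0:ℝ) < n := by
    exact_mod_cast Nat.lt_of_lt_of_le Nat.zero_lt_two h1
  have hnne : (n:ℝ) ≠ 0 := ne_of_gt hn0
  set L : ℝ := Real.logb bb n with hLdef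
  have hLval : L = ℓ / lam := by rw [hLdef, Real.logb, hℓ, hlam]
  have hL0 : (0:ℝ) < L := by rw [hLval]; exact div_pos hl0 hlam0
  have hl1 : (1:ℝ) ≤ ℓ := le_trans (le_max_left _ _) h2
  have hllam : lam ≤ ℓ := le_trans (le_max_right _ _) h2
  have hLge1 : (1:ℝ) ≤ L := by
    rw [hLval, le_div_iff₀ hlam0, one_mul]; exact hllam
  have hLl0 : (0:ℝ) < L * ℓ := mul_pos hL0 hl0
  have hLl1 : (1:ℝ) ≤ L * ℓ := one_le_mul_of_one_le_of_one_le hLge1 hl1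
  have hLlne : L * ℓ ≠ 0 := ne_of_gt hLl0
  set D : ℝ := Real.logb bb (L * ℓ) with hDdef
  have ha_eq : apn p n = L - D := by
    rw [apn, ← hbb, ← hLdef, ← hℓ, Real.logb_div hnne hLlne, ← hLdef, ← hDdef]
  have hD4 : 3 + (1 + at') / lam ≤ D := by
    have hLl : L * ℓ = ℓ * ℓ / lam := by rw [hLval]; ring
    have hlog : lam * 3 + (1 + at') ≤ Real.log (L * ℓ) := by
      rw [(Real.le_log_iff_exp_le hLl0)]
      rw [hLl]
      exact h4
    rw [hDdef, Real.logb, ← hlam]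
    rw [le_div_iff₀ hlam0]
    calc (3 + (1 + at') / lam) * lam = lam * 3 + (1 + at') := by field_simp
      _ ≤ Real.log (L * ℓ) := hlog
  have hD0 : (0:ℝ) < D := by
    have : (0:ℝ) < 3 + (1 + at') / lam := by positivity
    linarith
  have h5' : (1 + at') * L ≤ n := by
    have : (1 + at') * L = ((1 + at') / lam) * ℓ := by rw [hLval]; ring
    rw [this]; exact h5
  -- consequences of the weight constraint
  set aa : ℝ := apn p n with haa
  clear_value bb lam at' ℓ L D aa
  have haaLD : aa = L - D := ha_eq
  have hs' : (s:ℝ) + (b:ℝ) / at' ≤ aa := by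
    have hrw : (1 / at') * (b:ℝ) = (b:ℝ) / at' := by ring
    rw [hrw] at hs
    exact hs
  have hbat0 : (0:ℝ) ≤ (b:ℝ) / at' := by positivity
  have hsa : (s:ℝ) ≤ aa := by linarith
  have hsa' : (s:ℝ) ≤ aa - (b:ℝ) / at' := by linarith
  have hba : (b:ℝ) / at' ≤ aa := by
    have hs0 : (0:ℝ) ≤ (s:ℝ) := Nat.cast_nonneg s
    linarith
  have hb' : (b:ℝ) ≤ at' * aa := by
    rw [div_le_iff₀ hat0] at hba
    linarith [hba]
  have haa0 : (0:ℝ) ≤ aa := le_trans hbat0 hba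
  have haaL : aa ≤ L := by rw [haaLD]; linarith
  -- rpow computations
  have hps : ((1 - p):ℝ) ^ s = bb ^ (-(s:ℝ)) := by
    rw [Real.rpow_neg hbb0.le, Real.rpow_natCast, hbb, one_div, inv_pow, inv_inv]
  have hbaa : bb ^ aa = (n:ℝ) / (L * ℓ) := by
    rw [haa, apn, ← hbb, ← hLdef, ← hℓ]
    exact Real.rpow_logb hbb0 (ne_of_gt hbb1) (div_pos hn0 hLl0)
  have hbnaa : bb ^ (-aa) = (L * ℓ) / n := by
    rw [Real.rpow_neg (le_of_lt hbb0), hbaa, inv_div]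
  have hmono : bb ^ (-(aa - (b:ℝ)/at')) ≤ bb ^ (-(s:ℝ)) :=
    Real.rpow_le_rpow_of_exponent_le (le_of_lt hbb1) (by linarith)
  have hsplit : bb ^ (-(aa - (b:ℝ)/at')) = bb ^ (-aa) * bb ^ ((b:ℝ)/at') := by
    rw [← Real.rpow_add hbb0]; ring_nf
  have e1 : (L * ℓ) / n * bb ^ ((b:ℝ)/at') ≤ (1 - p) ^ s := by
    rw [hps, ← hbnaa]
    rw [← hsplit]
    exact hmono
  have hbt_le : bb ^ ((b:ℝ)/at') ≤ (n:ℝ) / (L * ℓ) := by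
    rw [← hbaa]
    exact Real.rpow_le_rpow_of_exponent_le (le_of_lt hbb1) hba
  have hbt_pos : (0:ℝ) < bb ^ ((b:ℝ)/at') := Real.rpow_pos_of_pos hbb0 _
  have e2 : (n:ℝ) - (1 + at') * aa ≤ (n:ℝ) - s - b := by linarith [hsa, hb']
  have e3 : (0:ℝ) ≤ (n:ℝ) - (1 + at') * aa := by
    have h6 : (1 + at') * aa ≤ (1 + at') * L :=
      mul_le_mul_of_nonneg_left haaL (by linarith)
    linarith
  have e4 : ((n:ℝ) - (1 + at') * aa) * ((L * ℓ) / n * bb ^ ((b:ℝ)/at'))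
      ≤ ((n:ℝ) - s - b) * (1 - p) ^ s := by
    refine mul_le_mul e2 e1 (by positivity) (by linarith)
  have e5 : (L * ℓ) / n * bb ^ ((b:ℝ)/at') ≤ 1 := by
    calc (L * ℓ) / n * bb ^ ((b:ℝ)/at') ≤ (L * ℓ) / n * ((n:ℝ) / (L * ℓ)) :=
          mul_le_mul_of_nonneg_left hbt_le (by positivity)
      _ = 1 := by field_simp
  have e7 : (n:ℝ) * ((L * ℓ) / n * bb ^ ((b:ℝ)/at')) = L * ℓ * bb ^ ((b:ℝ)/at') := by
    field_simp
  have e8 : (1 + at') * aa * ((L * ℓ) / n * bb ^ ((b:ℝ)/at')) ≤ (1 + at') * L := by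
    calc (1 + at') * aa * ((L * ℓ) / n * bb ^ ((b:ℝ)/at'))
        ≤ (1 + at') * L * 1 := by
          refine mul_le_mul ?_ e5 (by positivity) (by positivity)
          exact mul_le_mul_of_nonneg_left haaL (by linarith)
      _ = (1 + at') * L := mul_one _
  have hLlam : L * lam = ℓ := by
    rw [hLval]; field_simp
  have hexp : bb ^ ((b:ℝ)/at') = Real.exp (lam * ((b:ℝ)/at')) := by
    rw [Real.rpow_def_of_pos hbb0, ← hlam]
  have e9 : L * ℓ * (1 + lam * ((b:ℝ)/at')) ≤ L * ℓ * bb ^ ((b:ℝ)/at') := by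
    refine mul_le_mul_of_nonneg_left ?_ (le_of_lt hLl0)
    rw [hexp]
    linarith [Real.add_one_le_exp (lam * ((b:ℝ)/at'))]
  have e11 : (b:ℝ) * ℓ ≤ ℓ * ℓ * ((b:ℝ)/at') := by
    have hq : ℓ ≤ ℓ * ℓ / at' := by
      rw [le_div_iff₀ hat0]
      exact mul_le_mul_of_nonneg_left h3 hl0.le
    have := mul_le_mul_of_nonneg_left hq (Nat.cast_nonneg b : (0:ℝ) ≤ (b:ℝ))
    calc (b:ℝ) * ℓ ≤ (b:ℝ) * (ℓ * ℓ / at') := this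
      _ = ℓ * ℓ * ((b:ℝ)/at') := by ring
  have e12 : 3 * ℓ + (1 + at') * L ≤ D * ℓ := by
    have := mul_le_mul_of_nonneg_right hD4 (le_of_lt hl0)
    calc 3 * ℓ + (1 + at') * L = (3 + (1 + at') / lam) * ℓ := by
          rw [hLval]; field_simp
      _ ≤ D * ℓ := this
  have e13 : ((s:ℝ) + b + 3) * ℓ ≤ (L - D + b + 3) * ℓ := by
    refine mul_le_mul_of_nonneg_right ?_ (le_of_lt hl0)
    have : (s:ℝ) ≤ L - D := by rw [← haaLD]; exact hsa
    linarith
  have hcast : ((n - s - b : ℕ) : ℝ) = (n:ℝ) - s - b := by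
    have h' : s + b ≤ n := hsb
    rw [Nat.sub_sub]
    rw [Nat.cast_sub h']
    push_cast
    ring
  rw [hcast]
  calc ((s:ℝ) + b + 3) * ℓ ≤ (L - D + b + 3) * ℓ := e13
    _ = L * ℓ - D * ℓ + (b:ℝ) * ℓ + 3 * ℓ := by ring
    _ ≤ L * ℓ - (3 * ℓ + (1 + at') * L) + ℓ * ℓ * ((b:ℝ)/at') + 3 * ℓ := by
        linarith [e12, e11]
    _ = L * ℓ * (1 + lam * ((b:ℝ)/at')) - (1 + at') * L := by
        rw [show ℓ * ℓ * ((b:ℝ)/at') = (L * lam) * ℓ * ((b:ℝ)/at') by rw [hLlam]]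
        ring
    _ ≤ L * ℓ * bb ^ ((b:ℝ)/at') - (1 + at') * L := by linarith [e9]
    _ ≤ L * ℓ * bb ^ ((b:ℝ)/at') - (1 + at') * aa * ((L * ℓ) / n * bb ^ ((b:ℝ)/at')) := by
        linarith [e8]
    _ = ((n:ℝ) - (1 + at') * aa) * ((L * ℓ) / n * bb ^ ((b:ℝ)/at')) := by
        rw [← e7]; ring
    _ ≤ ((n:ℝ) - s - b) * (1 - p) ^ s := e4

/-! ### Per-term bound -/

lemma term_le {n s b : ℕ} {p : ℝ} (hp0 : 0 ≤ p) (hp1 : p ≤ 1) (hn : 1 ≤ n)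
    (h : ((s:ℝ) + b + 3) * Real.log n ≤ ((n - s - b : ℕ):ℝ) * (1 - p) ^ s) :
    ((1 - (1 - p) ^ s : ℝ)) ^ (n - s - b) ≤ (1 / (n:ℝ)) ^ (s + b + 3) := by
  have hn0 : (0:ℝ) < n := by exact_mod_cast Nat.lt_of_lt_of_le Nat.zero_lt_one hn
  have hq1 : (1 - p) ^ s ≤ 1 := pow_le_one₀ (by linarith) (by linarith)
  have hq0 : (0:ℝ) ≤ (1 - p) ^ s := pow_nonneg (by linarith) s
  calc ((1 - (1 - p) ^ s : ℝ)) ^ (n - s - b)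
      ≤ (Real.exp (-(1 - p) ^ s)) ^ (n - s - b) := by
        refine pow_le_pow_left₀ (by linarith) ?_ _
        linarith [Real.add_one_le_exp (-(1 - p) ^ s)]
    _ = Real.exp (-(((n - s - b : ℕ):ℝ) * (1 - p) ^ s)) := by
        rw [← Real.exp_nat_mul]
        congr 1
        ring
    _ ≤ Real.exp (-(((s:ℝ) + b + 3) * Real.log n)) := by
        refine Real.exp_le_exp.2 ?_
        linarith
    _ = (1 / (n:ℝ)) ^ (s + b + 3) := by
        rw [show ((s:ℝ) + b + 3) = ((s + b + 3 : ℕ):ℝ) by push_cast; ring]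
        rw [← Real.log_pow, Real.exp_neg, Real.exp_log (by positivity)]
        rw [div_pow, one_pow, one_div]

/-! ### Summation bound -/

open scoped Classical in
lemma sum_bound {n : ℕ} (hn : 1 ≤ n) (p c : ℝ) (hp0 : 0 ≤ p) (hp1 : p ≤ 1) (a : ℝ)
    (hkey : ∀ s b : ℕ, ((s : ℝ) + c * b ≤ a) → (s + b ≤ n) →
      ((s : ℝ) + b + 3) * Real.log n ≤ ((n - s - b : ℕ) : ℝ) * (1 - p) ^ s) :
    ∑ AB ∈ (Finset.univ.filter (fun AB : Finset (Fin n) × Finset (Fin n) =>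
        Disjoint AB.1 AB.2 ∧ (AB.1.card : ℝ) + c * AB.2.card ≤ a)),
      ((1 - (1 - p) ^ AB.1.card : ℝ)) ^ (n - AB.1.card - AB.2.card)
      ≤ 9 / (n:ℝ) ^ 3 := by
  have hn0 : (0:ℝ) < n := by exact_mod_cast Nat.lt_of_lt_of_le Nat.zero_lt_one hn
  have step1 : ∑ AB ∈ (Finset.univ.filter (fun AB : Finset (Fin n) × Finset (Fin n) =>
        Disjoint AB.1 AB.2 ∧ (AB.1.card : ℝ) + c * AB.2.card ≤ a)),
      ((1 - (1 - p) ^ AB.1.card : ℝ)) ^ (n - AB.1.card - AB.2.card)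
      ≤ ∑ AB ∈ (Finset.univ.filter (fun AB : Finset (Fin n) × Finset (Fin n) =>
        Disjoint AB.1 AB.2 ∧ (AB.1.card : ℝ) + c * AB.2.card ≤ a)),
      (1 / (n:ℝ)) ^ (AB.1.card + AB.2.card + 3) := by
    refine Finset.sum_le_sum fun AB hAB => ?_
    rw [Finset.mem_filter] at hAB
    have hsb : AB.1.card + AB.2.card ≤ n := by
      rw [← Finset.card_union_of_disjoint hAB.2.1]
      calc (AB.1 ∪ AB.2).card ≤ (Finset.univ : Finset (Fin n)).card :=
            Finset.card_le_card (Finset.subset_univ _)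
        _ = n := by rw [Finset.card_univ, Fintype.card_fin]
    exact term_le hp0 hp1 hn (hkey AB.1.card AB.2.card hAB.2.2 hsb)
  have step2 : ∑ AB ∈ (Finset.univ.filter (fun AB : Finset (Fin n) × Finset (Fin n) =>
        Disjoint AB.1 AB.2 ∧ (AB.1.card : ℝ) + c * AB.2.card ≤ a)),
      (1 / (n:ℝ)) ^ (AB.1.card + AB.2.card + 3)
      ≤ ∑ AB : Finset (Fin n) × Finset (Fin n),
        (1 / (n:ℝ)) ^ (AB.1.card + AB.2.card + 3) := by
    refine Finset.sum_le_sum_of_subset_of_nonneg (Finset.filter_subset _ _)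
      fun AB _ _ => by positivity
  have hsumA : ∑ A : Finset (Fin n), (1/(n:ℝ)) ^ A.card = (1/(n:ℝ) + 1) ^ n := by
    have := Fintype.sum_pow_mul_eq_add_pow (Fin n) (1/(n:ℝ)) 1
    rw [Fintype.card_fin] at this
    rw [← this]
    exact Finset.sum_congr rfl fun A _ => by rw [one_pow, mul_one]
  have hfac : (1/(n:ℝ) + 1) ^ n ≤ 3 := by
    calc (1/(n:ℝ) + 1) ^ n ≤ (Real.exp (1/(n:ℝ))) ^ n := by
          refine pow_le_pow_left₀ (by positivity) ?_ _
          linarith [Real.add_one_le_exp (1/(n:ℝ))]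
      _ = Real.exp ((n:ℝ) * (1/(n:ℝ))) := by rw [← Real.exp_nat_mul]
      _ = Real.exp 1 := by
          rw [mul_one_div, div_self (ne_of_gt hn0)]
      _ ≤ 3 := by
          have := Real.exp_one_lt_d9
          linarith
  have step3 : ∑ AB : Finset (Fin n) × Finset (Fin n),
      (1 / (n:ℝ)) ^ (AB.1.card + AB.2.card + 3)
      = (1/(n:ℝ) + 1) ^ n * (1/(n:ℝ) + 1) ^ n * (1/(n:ℝ)) ^ 3 := by
    rw [Fintype.sum_prod_type]
    have inner : ∀ A : Finset (Fin n),
        ∑ B : Finset (Fin n), (1 / (n:ℝ)) ^ (A.card + B.card + 3)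
        = (1/(n:ℝ)) ^ A.card * ((1/(n:ℝ) + 1) ^ n * (1/(n:ℝ)) ^ 3) := by
      intro A
      rw [← hsumA, Finset.sum_mul, Finset.mul_sum]
      refine Finset.sum_congr rfl fun B _ => ?_
      rw [pow_add, pow_add]
      ring
    rw [Finset.sum_congr rfl fun A _ => inner A]
    rw [← Finset.sum_mul, hsumA]
    ring
  have hfinal : (1/(n:ℝ) + 1) ^ n * (1/(n:ℝ) + 1) ^ n * (1/(n:ℝ)) ^ 3 ≤ 9 / (n:ℝ)^3 := by
    have hp3 : (0:ℝ) < (n:ℝ)^3 := by positivity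
    have h1 : (0:ℝ) ≤ (1/(n:ℝ) + 1) ^ n := by positivity
    have h2 : (1/(n:ℝ))^3 = 1/(n:ℝ)^3 := by rw [div_pow, one_pow]
    rw [h2]
    rw [div_eq_mul_inv, div_eq_mul_inv]
    have : (1/(n:ℝ) + 1) ^ n * (1/(n:ℝ) + 1) ^ n ≤ 9 := by nlinarith [hfac, h1]
    have hinv : (0:ℝ) ≤ ((n:ℝ)^3)⁻¹ := by positivity
    calc (1/(n:ℝ) + 1) ^ n * (1/(n:ℝ) + 1) ^ n * (1 * ((n:ℝ)^3)⁻¹)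
        = ((1/(n:ℝ) + 1) ^ n * (1/(n:ℝ) + 1) ^ n) * ((n:ℝ)^3)⁻¹ := by ring
      _ ≤ 9 * ((n:ℝ)^3)⁻¹ := mul_le_mul_of_nonneg_right this hinv
  calc _ ≤ _ := step1
    _ ≤ _ := step2
    _ = _ := step3
    _ ≤ _ := hfinal

end ERPr

end ERPrSection


open ERPr in
theorem stmt_19 (p : ℝ) (hp : p ∈ Set.Ioo (0 : ℝ) 1) (t : ℕ) (ht : 1 ≤ t) :
    Filter.Tendsto (fun n : ℕ =>
      erProb n p {G | apn p n < G.selfDom (1 / (t : ℝ))})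
      Filter.atTop (nhds 1) := by
  classical
  obtain ⟨hp0, hp1⟩ := hp
  have hp0' : (0:ℝ) ≤ p := hp0.le
  have hp1' : p ≤ 1 := hp1.le
  have ht0 : (0:ℝ) < (t:ℝ) := by exact_mod_cast Nat.lt_of_lt_of_le Nat.zero_lt_one ht
  have hc0 : (0:ℝ) < 1 / (t:ℝ) := by positivity
  have hc1 : (1:ℝ) / (t:ℝ) ≤ 1 := by
    rw [div_le_one ht0]
    exact_mod_cast ht
  -- the identity erProb = 1 - pr(bad)
  have hid : ∀ n : ℕ, erProb n p {G | apn p n < G.selfDom (1 / (t : ℝ))}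
      = 1 - pr p (fun f : Slot n → Bool =>
          (graphOf f).selfDom (1 / (t : ℝ)) ≤ apn p n) := by
    intro n
    rw [erProb_eq]
    have hcompl := pr_add_compl p (fun f : Slot n → Bool =>
      apn p n < (graphOf f).selfDom (1 / (t : ℝ)))
    have h1 : pr p (fun f : Slot n → Bool =>
        graphOf f ∈ {G : SimpleGraph (Fin n) | apn p n < G.selfDom (1 / (t : ℝ))})
        = pr p (fun f : Slot n → Bool => apn p n < (graphOf f).selfDom (1 / (t : ℝ))) :=
      pr_congr fun f => Iff.rfl
    have h2 : pr p (fun f : Slot n → Bool =>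
        ¬ apn p n < (graphOf f).selfDom (1 / (t : ℝ)))
        = pr p (fun f : Slot n → Bool => (graphOf f).selfDom (1 / (t : ℝ)) ≤ apn p n) :=
      pr_congr fun f => not_lt
    rw [h1]
    linarith [hcompl, h2]
  -- the bad probability tends to zero
  have hbad : Tendsto (fun n : ℕ => pr p (fun f : Slot n → Bool =>
      (graphOf f).selfDom (1 / (t : ℝ)) ≤ apn p n)) atTop (nhds 0) := by
    have hb : ∀ᶠ n : ℕ in atTop, pr p (fun f : Slot n → Bool =>
        (graphOf f).selfDom (1 / (t : ℝ)) ≤ apn p n) ≤ 9 / (n:ℝ)^3 := by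
      filter_upwards [key_ineq p hp0 hp1 t ht, eventually_ge_atTop 1] with n hkey hn1
      calc pr p (fun f : Slot n → Bool =>
            (graphOf f).selfDom (1 / (t : ℝ)) ≤ apn p n)
          ≤ ∑ AB ∈ (Finset.univ.filter (fun AB : Finset (Fin n) × Finset (Fin n) =>
              Disjoint AB.1 AB.2 ∧ (AB.1.card : ℝ) + (1/(t:ℝ)) * AB.2.card ≤ apn p n)),
            ((1 - (1 - p) ^ AB.1.card : ℝ)) ^ (n - AB.1.card - AB.2.card) :=
            pr_bad_le (1/(t:ℝ)) hc0 hc1 p hp0' hp1' (apn p n)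
        _ ≤ 9 / (n:ℝ)^3 := sum_bound hn1 p (1/(t:ℝ)) hp0' hp1' (apn p n) hkey
    have h0 : ∀ᶠ n : ℕ in atTop, 0 ≤ pr p (fun f : Slot n → Bool =>
        (graphOf f).selfDom (1 / (t : ℝ)) ≤ apn p n) :=
      Filter.Eventually.of_forall fun n => pr_nonneg hp0' hp1' _
    have htend : Tendsto (fun n : ℕ => 9 / (n:ℝ)^3) atTop (nhds 0) := by
      refine Tendsto.div_atTop tendsto_const_nhds ?_
      exact (tendsto_pow_atTop (by norm_num)).comp tendsto_natCast_atTop_atTop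
    exact squeeze_zero' h0 hb htend
  have : Tendsto (fun n : ℕ => 1 - pr p (fun f : Slot n → Bool =>
      (graphOf f).selfDom (1 / (t : ℝ)) ≤ apn p n)) atTop (nhds (1 - 0)) :=
    Tendsto.sub tendsto_const_nhds hbad
  rw [sub_zero] at this
  exact Tendsto.congr (fun n => (hid n).symm) this
end
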